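/- arXiv:1011.4698 — 5 statements merged into one kernel-verified Lean document; each statement's English description precedes it below -/
import Mathlib

section
/- One has I₂² + I·J₂ ⊆ I·I₂, the quotient (I₂² + I·J₂)/(I·J₂) is a 1-dimensional k-vector space generated by the class of y², and the quotient (I·I₂)/(I₂² + I·J₂) is a 1-dimensional k-vector space generated by the class of xy. (This is the local content of the exact sequence 0 → L⊗K → E⊗K → K² → 0 in the proof of the Lemma, which yields the necessary exact sequence 0 → L → E → K → 0 for C_{2,n} structures.) -/
set_option maxHeartbeats 1000000
/-- For ideals `B ⊆ A` of `R`, the image of `A` in `R ⧸ B`, viewed as a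
`k`-submodule of `R ⧸ B`; this represents the subquotient `A/B`. -/
noncomputable def gradedPiece (k : Type) [Field k] {R : Type} [CommRing R] [Algebra k R]
    (A B : Ideal R) : Submodule k (R ⧸ B) :=
  Submodule.restrictScalars k (A.map (Ideal.Quotient.mk B))

namespace Stmt9Aux

open MvPowerSeries Finsupp

variable {k : Type} [Field k] {m : ℕ}

lemma coeff_zero_of_pow_factor (i : Fin m) (a : ℕ) (d : Fin m →₀ ℕ) (hd : d i < a)
    (f h : MvPowerSeries (Fin m) k) (hh : h = MvPowerSeries.X i ^ a * f)
    (g : MvPowerSeries (Fin m) k) : MvPowerSeries.coeff (R := k) d (g * h) = 0 := by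
  have he : g * h = (g * f) * monomial (R := k) (single i a) 1 := by
    rw [hh, X_pow_eq]; ring
  rw [he, coeff_mul_monomial, if_neg]
  rw [single_le_iff]; omega

lemma mem_span_X (h : MvPowerSeries (Fin m) k)
    (h0 : constantCoeff (σ := Fin m) (R := k) h = 0) :
    h ∈ Ideal.span (Set.range (MvPowerSeries.X : Fin m → MvPowerSeries (Fin m) k)) := by
  classical
  set g : Fin m → MvPowerSeries (Fin m) k := fun i d =>
    if ∀ j, j < i → d j = 0 then MvPowerSeries.coeff (R := k) (d + single i 1) h else 0 with hg
  have hgc : ∀ (i : Fin m) (d : Fin m →₀ ℕ), MvPowerSeries.coeff (R := k) d (g i) =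
      if ∀ j, j < i → d j = 0 then MvPowerSeries.coeff (R := k) (d + single i 1) h else 0 :=
    fun i d => rfl
  have hXi : ∀ i : Fin m,
      (MvPowerSeries.X i : MvPowerSeries (Fin m) k) = monomial (R := k) (single i 1) 1 := fun i => rfl
  have key : h = ∑ i : Fin m, g i * MvPowerSeries.X i := by
    ext e
    rw [map_sum]
    by_cases he : e = 0
    · subst he
      rw [Finset.sum_eq_zero, coeff_zero_eq_constantCoeff_apply, h0]
      intro i _
      rw [hXi, coeff_mul_monomial, if_neg]
      intro hle
      have := single_le_iff.mp hle
      simp at this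
    · have hne : e.support.Nonempty := Finsupp.support_nonempty_iff.mpr he
      set i₀ := e.support.min' hne with hi₀
      have hi₀mem : i₀ ∈ e.support := Finset.min'_mem _ _
      have hi₀ne : e i₀ ≠ 0 := Finsupp.mem_support_iff.mp hi₀mem
      have hmin : ∀ j, j < i₀ → e j = 0 := by
        intro j hj
        by_contra hj0
        exact absurd (Finset.min'_le _ j (Finsupp.mem_support_iff.mpr hj0)) (not_le.mpr hj)
      rw [Finset.sum_eq_single i₀]
      · have hle : single i₀ 1 ≤ e := single_le_iff.mpr (Nat.one_le_iff_ne_zero.mpr hi₀ne)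
        rw [hXi, coeff_mul_monomial, if_pos hle, mul_one, hgc, if_pos, tsub_add_cancel_of_le hle]
        intro j hj
        rw [tsub_apply, hmin j hj, Nat.zero_sub]
      · intro b _ hb
        rw [hXi, coeff_mul_monomial]
        split_ifs with hle
        · have heb : e b ≠ 0 := by
            have := single_le_iff.mp hle; omega
          have hlt : i₀ < b :=
            lt_of_le_of_ne (Finset.min'_le _ b (Finsupp.mem_support_iff.mpr heb)) (Ne.symm hb)
          rw [hgc, if_neg, zero_mul]
          intro hall
          have h1 := hall i₀ hlt
          rw [tsub_apply, single_eq_of_ne hb.symm, Nat.sub_zero] at h1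
          exact hi₀ne h1
        · rfl
      · intro hni; exact absurd (Finset.mem_univ i₀) hni
  rw [key]
  exact Ideal.sum_mem _ fun i _ =>
    Ideal.mul_mem_left _ _ (Ideal.subset_span ⟨i, rfl⟩)

lemma coeff_eq_zero_of_mem_span_mul {d : Fin m →₀ ℕ} {s t : Set (MvPowerSeries (Fin m) k)}
    (hst : ∀ a ∈ s, ∀ b ∈ t, ∀ g, MvPowerSeries.coeff (R := k) d (g * (a * b)) = 0)
    {f : MvPowerSeries (Fin m) k}
    (hf : f ∈ Ideal.span s * Ideal.span t) : MvPowerSeries.coeff (R := k) d f = 0 := by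
  have H : ∀ g, MvPowerSeries.coeff (R := k) d (g * f) = 0 := by
    refine Submodule.mul_induction_on hf ?_ ?_
    · intro a ha b hb
      induction ha using Submodule.span_induction with
      | mem a' ha' =>
        induction hb using Submodule.span_induction with
        | mem b' hb' => exact hst a' ha' b' hb'
        | zero => intro g; simp
        | add u v hu hv ihu ihv =>
          intro g
          have e : g * (a' * (u + v)) = g * (a' * u) + g * (a' * v) := by ring
          rw [e, map_add, ihu g, ihv g, add_zero]
        | smul r u hu ih =>
          intro g
          have e : g * (a' * (r • u)) = (g * r) * (a' * u) := by
            rw [smul_eq_mul]; ring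
          rw [e]; exact ih (g * r)
      | zero => intro g; simp
      | add u v hu hv ihu ihv =>
        intro g
        have e : g * ((u + v) * b) = g * (u * b) + g * (v * b) := by ring
        rw [e, map_add, ihu g, ihv g, add_zero]
      | smul r u hu ih =>
        intro g
        have e : g * ((r • u) * b) = (g * r) * (u * b) := by
          rw [smul_eq_mul]; ring
        rw [e]; exact ih (g * r)
    · intro u v hu hv g
      rw [mul_add, map_add, hu g, hv g, add_zero]
  have := H 1
  rwa [one_mul] at this

lemma graded_singleton {R : Type} [CommRing R] [Algebra k R] (B : Ideal R) (v : R)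
    (hv : ∀ q : R, ∃ c : k, q * v - algebraMap k R c * v ∈ B) :
    gradedPiece k (B ⊔ Ideal.span {v}) B = Submodule.span k {Ideal.Quotient.mk B v} := by
  unfold gradedPiece
  rw [Ideal.map_sup, Ideal.map_quotient_self, bot_sup_eq, Ideal.map_span, Set.image_singleton]
  apply le_antisymm
  · intro w hw
    rw [Submodule.restrictScalars_mem] at hw
    obtain ⟨a, ha⟩ := Ideal.mem_span_singleton'.mp hw
    obtain ⟨q, rfl⟩ := Ideal.Quotient.mk_surjective a
    obtain ⟨c, hc⟩ := hv q
    have h2 : Ideal.Quotient.mk B q * Ideal.Quotient.mk B v = c • Ideal.Quotient.mk B v := by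
      rw [Algebra.smul_def, IsScalarTower.algebraMap_apply k R (R ⧸ B) c,
        Ideal.Quotient.algebraMap_eq, ← map_mul, ← map_mul, Ideal.Quotient.mk_eq_mk_iff_sub_mem]
      exact hc
    rw [← ha, h2]
    exact Submodule.smul_mem _ _ (Submodule.mem_span_singleton_self _)
  · rw [Submodule.span_le, Set.singleton_subset_iff]
    exact Ideal.subset_span rfl

end Stmt9Aux

open MvPowerSeries Finsupp Stmt9Aux

/-- In the local model of a `C_{2,n}` cuspidal structure: `I₂² + I·J₂ ⊆ I·I₂`,
`(I₂² + I·J₂)/(I·J₂)` is 1-dimensional generated by the class of `y²`, and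
`(I·I₂)/(I₂² + I·J₂)` is 1-dimensional generated by the class of `xy`
(local content of `0 → L⊗K → E⊗K → K² → 0`). -/
theorem stmt_9 (k : Type) [Field k] (n r : ℕ) (hn : 3 ≤ n)
    (x y : MvPowerSeries (Fin (r + 2)) k) (z : Fin r → MvPowerSeries (Fin (r + 2)) k)
    (hx : x = MvPowerSeries.X 0) (hy : y = MvPowerSeries.X 1)
    (hz : ∀ i : Fin r, z i = MvPowerSeries.X i.succ.succ)
    (I J I₂ J₂ : Ideal (MvPowerSeries (Fin (r + 2)) k))
    (hI : I = Ideal.span ({x, y} ∪ Set.range z))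
    (hJ : J = Ideal.span ({y ^ 2 + x ^ n, x * y} ∪ Set.range z))
    (hI₂ : I₂ = Ideal.span ({x ^ 2, y} ∪ Set.range z))
    (hJ₂ : J₂ = Ideal.span ({x ^ 2, x * y, y ^ 2} ∪ Set.range z)) :
    I₂ ^ 2 + I * J₂ ≤ I * I₂ ∧
    (gradedPiece k (I₂ ^ 2 + I * J₂) (I * J₂) =
        Submodule.span k {Ideal.Quotient.mk (I * J₂) (y ^ 2)} ∧
      Module.finrank k (gradedPiece k (I₂ ^ 2 + I * J₂) (I * J₂)) = 1) ∧
    (gradedPiece k (I * I₂) (I₂ ^ 2 + I * J₂) =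
        Submodule.span k {Ideal.Quotient.mk (I₂ ^ 2 + I * J₂) (x * y)} ∧
      Module.finrank k (gradedPiece k (I * I₂) (I₂ ^ 2 + I * J₂)) = 1) := by
  have hzf : z = fun j : Fin r => MvPowerSeries.X j.succ.succ := funext hz
  subst hx hy hzf
  -- basic `Fin` facts
  have h01 : (0 : Fin (r + 2)) ≠ 1 := Fin.ne_of_val_ne (by simp)
  have h10 : (1 : Fin (r + 2)) ≠ 0 := Ne.symm h01
  have hz0 : ∀ j : Fin r, (j.succ.succ : Fin (r + 2)) ≠ 0 := fun j => Fin.succ_ne_zero _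
  have hz1 : ∀ j : Fin r, (j.succ.succ : Fin (r + 2)) ≠ 1 := by
    intro j h
    rw [← Fin.succ_zero_eq_one] at h
    exact Fin.succ_ne_zero j (Fin.succ_injective _ h)
  have h0z : ∀ j : Fin r, (0 : Fin (r + 2)) ≠ j.succ.succ := fun j => (hz0 j).symm
  have h1z : ∀ j : Fin r, (1 : Fin (r + 2)) ≠ j.succ.succ := fun j => (hz1 j).symm
  -- membership facts
  have hxI : MvPowerSeries.X (0 : Fin (r + 2)) ∈ I := by
    rw [hI]; exact Ideal.subset_span (Or.inl (Set.mem_insert _ _))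
  have hyI : MvPowerSeries.X (1 : Fin (r + 2)) ∈ I := by
    rw [hI]; exact Ideal.subset_span (Or.inl (Set.mem_insert_of_mem _ rfl))
  have hzI : ∀ j : Fin r, MvPowerSeries.X (j.succ.succ : Fin (r + 2)) ∈ I := by
    intro j; rw [hI]; exact Ideal.subset_span (Or.inr ⟨j, rfl⟩)
  have hx2J₂ : MvPowerSeries.X (0 : Fin (r + 2)) ^ 2 ∈ J₂ := by
    rw [hJ₂]; exact Ideal.subset_span (Or.inl (Set.mem_insert _ _))
  have hxyJ₂ : MvPowerSeries.X (0 : Fin (r + 2)) * MvPowerSeries.X 1 ∈ J₂ := by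
    rw [hJ₂]; exact Ideal.subset_span (Or.inl (Set.mem_insert_of_mem _ (Set.mem_insert _ _)))
  have hy2J₂ : MvPowerSeries.X (1 : Fin (r + 2)) ^ 2 ∈ J₂ := by
    rw [hJ₂]
    exact Ideal.subset_span (Or.inl (Set.mem_insert_of_mem _ (Set.mem_insert_of_mem _ rfl)))
  have hzJ₂ : ∀ j : Fin r, MvPowerSeries.X (j.succ.succ : Fin (r + 2)) ∈ J₂ := by
    intro j; rw [hJ₂]; exact Ideal.subset_span (Or.inr ⟨j, rfl⟩)
  have hx2I₂ : MvPowerSeries.X (0 : Fin (r + 2)) ^ 2 ∈ I₂ := by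
    rw [hI₂]; exact Ideal.subset_span (Or.inl (Set.mem_insert _ _))
  have hyI₂ : MvPowerSeries.X (1 : Fin (r + 2)) ∈ I₂ := by
    rw [hI₂]; exact Ideal.subset_span (Or.inl (Set.mem_insert_of_mem _ rfl))
  have hzI₂ : ∀ j : Fin r, MvPowerSeries.X (j.succ.succ : Fin (r + 2)) ∈ I₂ := by
    intro j; rw [hI₂]; exact Ideal.subset_span (Or.inr ⟨j, rfl⟩)
  have hJ₂I₂ : J₂ ≤ I₂ := by
    rw [hJ₂, Ideal.span_le]
    rintro v hv
    simp only [Set.mem_union, Set.mem_insert_iff, Set.mem_singleton_iff, Set.mem_range] at hv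
    rcases hv with (rfl | rfl | rfl) | ⟨j, rfl⟩
    · exact hx2I₂
    · exact Ideal.mul_mem_left _ _ hyI₂
    · rw [sq]; exact Ideal.mul_mem_left _ _ hyI₂
    · exact hzI₂ j
  have hI₂I : I₂ ≤ I := by
    rw [hI₂, Ideal.span_le]
    rintro v hv
    simp only [Set.mem_union, Set.mem_insert_iff, Set.mem_singleton_iff, Set.mem_range] at hv
    rcases hv with (rfl | rfl) | ⟨j, rfl⟩
    · rw [sq]; exact Ideal.mul_mem_left _ _ hxI
    · exact hyI
    · exact hzI j
  have hJ₂I : J₂ ≤ I := hJ₂I₂.trans hI₂I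
  have part1 : I₂ ^ 2 + I * J₂ ≤ I * I₂ := by
    rw [Ideal.add_eq_sup]
    apply sup_le
    · rw [sq]; exact Ideal.mul_mono hI₂I le_rfl
    · exact Ideal.mul_mono le_rfl hJ₂I₂
  -- structural decompositions
  have hI₂eq : I₂ = J₂ ⊔ Ideal.span {MvPowerSeries.X (1 : Fin (r + 2))} := by
    apply le_antisymm
    · rw [hI₂, Ideal.span_le]
      rintro v hv
      simp only [Set.mem_union, Set.mem_insert_iff, Set.mem_singleton_iff, Set.mem_range] at hv
      rcases hv with (rfl | rfl) | ⟨j, rfl⟩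
      · exact Submodule.mem_sup_left hx2J₂
      · exact Submodule.mem_sup_right (Ideal.subset_span rfl)
      · exact Submodule.mem_sup_left (hzJ₂ j)
    · apply sup_le hJ₂I₂
      rw [Ideal.span_le, Set.singleton_subset_iff]; exact hyI₂
  have hIeq : I = I₂ ⊔ Ideal.span {MvPowerSeries.X (0 : Fin (r + 2))} := by
    apply le_antisymm
    · rw [hI, Ideal.span_le]
      rintro v hv
      simp only [Set.mem_union, Set.mem_insert_iff, Set.mem_singleton_iff, Set.mem_range] at hv
      rcases hv with (rfl | rfl) | ⟨j, rfl⟩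
      · exact Submodule.mem_sup_right (Ideal.subset_span rfl)
      · exact Submodule.mem_sup_left hyI₂
      · exact Submodule.mem_sup_left (hzI₂ j)
    · apply sup_le hI₂I
      rw [Ideal.span_le, Set.singleton_subset_iff]; exact hxI
  have hy2A : MvPowerSeries.X (1 : Fin (r + 2)) ^ 2 ∈ I₂ ^ 2 + I * J₂ := by
    rw [Ideal.add_eq_sup]
    apply Submodule.mem_sup_left
    have h := Ideal.mul_mem_mul hyI₂ hyI₂
    rwa [← sq, ← sq] at h
  have hA : I₂ ^ 2 + I * J₂ = I * J₂ ⊔ Ideal.span {MvPowerSeries.X (1 : Fin (r + 2)) ^ 2} := by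
    apply le_antisymm
    · rw [Ideal.add_eq_sup]
      apply sup_le ?_ le_sup_left
      rw [sq, hI₂eq, Ideal.sup_mul, Ideal.mul_sup, Ideal.mul_sup]
      refine sup_le (sup_le ?_ ?_) (sup_le ?_ ?_)
      · exact le_trans (Ideal.mul_mono hJ₂I le_rfl) le_sup_left
      · rw [mul_comm]
        refine le_trans (Ideal.mul_mono ?_ le_rfl) le_sup_left
        rw [Ideal.span_le, Set.singleton_subset_iff]; exact hyI
      · refine le_trans (Ideal.mul_mono ?_ le_rfl) le_sup_left
        rw [Ideal.span_le, Set.singleton_subset_iff]; exact hyI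
      · rw [Ideal.span_singleton_mul_span_singleton, ← sq]
        exact le_sup_right
    · apply sup_le
      · rw [Ideal.add_eq_sup]; exact le_sup_right
      · rw [Ideal.span_le, Set.singleton_subset_iff]; exact hy2A
  have hxyT : MvPowerSeries.X (0 : Fin (r + 2)) * MvPowerSeries.X 1 ∈ I * I₂ :=
    Ideal.mul_mem_mul hxI hyI₂
  have hT : I * I₂ = (I₂ ^ 2 + I * J₂) ⊔
      Ideal.span {MvPowerSeries.X (0 : Fin (r + 2)) * MvPowerSeries.X 1} := by
    apply le_antisymm
    · conv_lhs => rw [hI₂eq]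
      rw [Ideal.mul_sup]
      apply sup_le
      · refine le_trans ?_ le_sup_left
        rw [Ideal.add_eq_sup]; exact le_sup_right
      · rw [hIeq, Ideal.sup_mul]
        apply sup_le
        · refine le_trans ?_ le_sup_left
          rw [Ideal.add_eq_sup]
          refine le_trans ?_ le_sup_left
          rw [sq]
          refine Ideal.mul_mono le_rfl ?_
          rw [Ideal.span_le, Set.singleton_subset_iff]; exact hyI₂
        · rw [Ideal.span_singleton_mul_span_singleton]
          exact le_sup_right
    · apply sup_le part1
      rw [Ideal.span_le, Set.singleton_subset_iff]; exact hxyT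
  -- the constant-coefficient decomposition
  have hspanX : Ideal.span (Set.range
      (MvPowerSeries.X : Fin (r + 2) → MvPowerSeries (Fin (r + 2)) k)) ≤ I := by
    rw [Ideal.span_le]
    rintro v ⟨i, rfl⟩
    refine Fin.cases hxI (fun j => ?_) i
    refine Fin.cases ?_ (fun l => ?_) j
    · rw [Fin.succ_zero_eq_one]; exact hyI
    · exact hzI l
  have hconst : ∀ q : MvPowerSeries (Fin (r + 2)) k,
      q - algebraMap k _ (constantCoeff (σ := Fin (r + 2)) (R := k) q) ∈ I := by
    intro q
    apply hspanX
    apply mem_span_X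
    rw [map_sub, ← MvPowerSeries.c_eq_algebraMap, constantCoeff_C, sub_self]
  -- coefficient vanishing
  have hvanB0 : ∀ f ∈ I * J₂,
      MvPowerSeries.coeff (R := k) (single (1 : Fin (r + 2)) 2) f = 0 := by
    intro f hf
    rw [hI, hJ₂] at hf
    refine coeff_eq_zero_of_mem_span_mul ?_ hf
    intro a ha b hb g
    simp only [Set.mem_union, Set.mem_insert_iff, Set.mem_singleton_iff, Set.mem_range] at ha hb
    rcases ha with (rfl | rfl) | ⟨i, rfl⟩ <;> rcases hb with (rfl | rfl | rfl) | ⟨j, rfl⟩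
    · exact coeff_zero_of_pow_factor 0 1 _
        (by simp [Finsupp.single_apply, h10]) ((MvPowerSeries.X (0 : Fin (r + 2))) ^ 2) _ (by ring) g
    · exact coeff_zero_of_pow_factor 0 1 _
        (by simp [Finsupp.single_apply, h10]) ((MvPowerSeries.X (0 : Fin (r + 2))) * (MvPowerSeries.X (1 : Fin (r + 2)))) _ (by ring) g
    · exact coeff_zero_of_pow_factor 0 1 _
        (by simp [Finsupp.single_apply, h10]) ((MvPowerSeries.X (1 : Fin (r + 2))) ^ 2) _ (by ring) g
    · exact coeff_zero_of_pow_factor 0 1 _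
        (by simp [Finsupp.single_apply, h10]) (MvPowerSeries.X (j.succ.succ : Fin (r + 2))) _ (by ring) g
    · exact coeff_zero_of_pow_factor 0 2 _
        (by simp [Finsupp.single_apply, h10]) ((MvPowerSeries.X (1 : Fin (r + 2)))) _ (by ring) g
    · exact coeff_zero_of_pow_factor 0 1 _
        (by simp [Finsupp.single_apply, h10]) ((MvPowerSeries.X (1 : Fin (r + 2))) ^ 2) _ (by ring) g
    · exact coeff_zero_of_pow_factor 1 3 _
        (by simp [Finsupp.single_apply, h10]) ((1 : MvPowerSeries (Fin (r + 2)) k)) _ (by ring) g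
    · exact coeff_zero_of_pow_factor j.succ.succ 1 _
        (by simp [Finsupp.single_apply, h1z]) ((MvPowerSeries.X (1 : Fin (r + 2)))) _ (by ring) g
    · exact coeff_zero_of_pow_factor 0 2 _
        (by simp [Finsupp.single_apply, h10]) (MvPowerSeries.X (i.succ.succ : Fin (r + 2))) _ (by ring) g
    · exact coeff_zero_of_pow_factor 0 1 _
        (by simp [Finsupp.single_apply, h10]) (MvPowerSeries.X (i.succ.succ : Fin (r + 2)) * (MvPowerSeries.X (1 : Fin (r + 2)))) _ (by ring) g
    · exact coeff_zero_of_pow_factor i.succ.succ 1 _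
        (by simp [Finsupp.single_apply, h1z]) ((MvPowerSeries.X (1 : Fin (r + 2))) ^ 2) _ (by ring) g
    · exact coeff_zero_of_pow_factor i.succ.succ 1 _
        (by simp [Finsupp.single_apply, h1z]) (MvPowerSeries.X (j.succ.succ : Fin (r + 2))) _ (by ring) g
  have hvanB1 : ∀ f ∈ I * J₂,
      MvPowerSeries.coeff (R := k) (single (0 : Fin (r + 2)) 1 + single 1 1) f = 0 := by
    intro f hf
    rw [hI, hJ₂] at hf
    refine coeff_eq_zero_of_mem_span_mul ?_ hf
    intro a ha b hb g
    simp only [Set.mem_union, Set.mem_insert_iff, Set.mem_singleton_iff, Set.mem_range] at ha hb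
    rcases ha with (rfl | rfl) | ⟨i, rfl⟩ <;> rcases hb with (rfl | rfl | rfl) | ⟨j, rfl⟩
    · exact coeff_zero_of_pow_factor 0 2 _
        (by simp [Finsupp.single_apply, h01, h10]) ((MvPowerSeries.X (0 : Fin (r + 2)))) _ (by ring) g
    · exact coeff_zero_of_pow_factor 0 2 _
        (by simp [Finsupp.single_apply, h01, h10]) ((MvPowerSeries.X (1 : Fin (r + 2)))) _ (by ring) g
    · exact coeff_zero_of_pow_factor 1 2 _
        (by simp [Finsupp.single_apply, h01, h10]) ((MvPowerSeries.X (0 : Fin (r + 2)))) _ (by ring) g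
    · exact coeff_zero_of_pow_factor j.succ.succ 1 _
        (by simp [Finsupp.single_apply, h0z, h1z]) ((MvPowerSeries.X (0 : Fin (r + 2)))) _ (by ring) g
    · exact coeff_zero_of_pow_factor 0 2 _
        (by simp [Finsupp.single_apply, h01, h10]) ((MvPowerSeries.X (1 : Fin (r + 2)))) _ (by ring) g
    · exact coeff_zero_of_pow_factor 1 2 _
        (by simp [Finsupp.single_apply, h01, h10]) ((MvPowerSeries.X (0 : Fin (r + 2)))) _ (by ring) g
    · exact coeff_zero_of_pow_factor 1 2 _
        (by simp [Finsupp.single_apply, h01, h10]) ((MvPowerSeries.X (1 : Fin (r + 2)))) _ (by ring) g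
    · exact coeff_zero_of_pow_factor j.succ.succ 1 _
        (by simp [Finsupp.single_apply, h0z, h1z]) ((MvPowerSeries.X (1 : Fin (r + 2)))) _ (by ring) g
    · exact coeff_zero_of_pow_factor 0 2 _
        (by simp [Finsupp.single_apply, h01, h10]) (MvPowerSeries.X (i.succ.succ : Fin (r + 2))) _ (by ring) g
    · exact coeff_zero_of_pow_factor i.succ.succ 1 _
        (by simp [Finsupp.single_apply, h0z, h1z]) ((MvPowerSeries.X (0 : Fin (r + 2))) * (MvPowerSeries.X (1 : Fin (r + 2)))) _ (by ring) g
    · exact coeff_zero_of_pow_factor 1 2 _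
        (by simp [Finsupp.single_apply, h01, h10]) (MvPowerSeries.X (i.succ.succ : Fin (r + 2))) _ (by ring) g
    · exact coeff_zero_of_pow_factor i.succ.succ 1 _
        (by simp [Finsupp.single_apply, h0z, h1z]) (MvPowerSeries.X (j.succ.succ : Fin (r + 2))) _ (by ring) g
  have hvanI₂ : ∀ f ∈ I₂ ^ 2,
      MvPowerSeries.coeff (R := k) (single (0 : Fin (r + 2)) 1 + single 1 1) f = 0 := by
    intro f hf
    rw [sq, hI₂] at hf
    refine coeff_eq_zero_of_mem_span_mul ?_ hf
    intro a ha b hb g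
    simp only [Set.mem_union, Set.mem_insert_iff, Set.mem_singleton_iff, Set.mem_range] at ha hb
    rcases ha with (rfl | rfl) | ⟨i, rfl⟩ <;> rcases hb with (rfl | rfl) | ⟨j, rfl⟩
    · exact coeff_zero_of_pow_factor 0 2 _
        (by simp [Finsupp.single_apply, h01, h10]) ((MvPowerSeries.X (0 : Fin (r + 2))) ^ 2) _ (by ring) g
    · exact coeff_zero_of_pow_factor 0 2 _
        (by simp [Finsupp.single_apply, h01, h10]) ((MvPowerSeries.X (1 : Fin (r + 2)))) _ (by ring) g
    · exact coeff_zero_of_pow_factor 0 2 _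
        (by simp [Finsupp.single_apply, h01, h10]) (MvPowerSeries.X (j.succ.succ : Fin (r + 2))) _ (by ring) g
    · exact coeff_zero_of_pow_factor 0 2 _
        (by simp [Finsupp.single_apply, h01, h10]) ((MvPowerSeries.X (1 : Fin (r + 2)))) _ (by ring) g
    · exact coeff_zero_of_pow_factor 1 2 _
        (by simp [Finsupp.single_apply, h01, h10]) ((1 : MvPowerSeries (Fin (r + 2)) k)) _ (by ring) g
    · exact coeff_zero_of_pow_factor j.succ.succ 1 _
        (by simp [Finsupp.single_apply, h0z, h1z]) ((MvPowerSeries.X (1 : Fin (r + 2)))) _ (by ring) g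
    · exact coeff_zero_of_pow_factor 0 2 _
        (by simp [Finsupp.single_apply, h01, h10]) (MvPowerSeries.X (i.succ.succ : Fin (r + 2))) _ (by ring) g
    · exact coeff_zero_of_pow_factor i.succ.succ 1 _
        (by simp [Finsupp.single_apply, h0z, h1z]) ((MvPowerSeries.X (1 : Fin (r + 2)))) _ (by ring) g
    · exact coeff_zero_of_pow_factor i.succ.succ 1 _
        (by simp [Finsupp.single_apply, h0z, h1z]) (MvPowerSeries.X (j.succ.succ : Fin (r + 2))) _ (by ring) g
  -- nonmembership
  have hy2mono : (MvPowerSeries.X (1 : Fin (r + 2)) ^ 2 : MvPowerSeries (Fin (r + 2)) k) =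
      monomial (R := k) (single (1 : Fin (r + 2)) 2) 1 := X_pow_eq _ 2
  have hxymono : (MvPowerSeries.X (0 : Fin (r + 2)) * MvPowerSeries.X 1 :
      MvPowerSeries (Fin (r + 2)) k) =
      monomial (R := k) (single (0 : Fin (r + 2)) 1 + single 1 1) 1 := by
    rw [← pow_one (MvPowerSeries.X (0 : Fin (r + 2))),
      ← pow_one (MvPowerSeries.X (1 : Fin (r + 2))), X_pow_eq, X_pow_eq,
      monomial_mul_monomial, one_mul]
  have hy2notB : MvPowerSeries.X (1 : Fin (r + 2)) ^ 2 ∉ I * J₂ := by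
    intro hmem
    have h := hvanB0 _ hmem
    rw [hy2mono, coeff_monomial_same] at h
    exact one_ne_zero h
  have hxynotA : MvPowerSeries.X (0 : Fin (r + 2)) * MvPowerSeries.X 1 ∉ I₂ ^ 2 + I * J₂ := by
    intro hmem
    rw [Ideal.add_eq_sup, Submodule.mem_sup] at hmem
    obtain ⟨u, hu, w, hw, huw⟩ := hmem
    have h : MvPowerSeries.coeff (R := k) (single (0 : Fin (r + 2)) 1 + single 1 1)
        (MvPowerSeries.X (0 : Fin (r + 2)) * MvPowerSeries.X 1) = 0 := by
      rw [← huw, map_add, hvanI₂ _ hu, hvanB1 _ hw, add_zero]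
    rw [hxymono, coeff_monomial_same] at h
    exact one_ne_zero h
  have hv1ne : Ideal.Quotient.mk (I * J₂) (MvPowerSeries.X (1 : Fin (r + 2)) ^ 2) ≠ 0 := by
    rw [Ne, Ideal.Quotient.eq_zero_iff_mem]; exact hy2notB
  have hv2ne : Ideal.Quotient.mk (I₂ ^ 2 + I * J₂)
      (MvPowerSeries.X (0 : Fin (r + 2)) * MvPowerSeries.X 1) ≠ 0 := by
    rw [Ne, Ideal.Quotient.eq_zero_iff_mem]; exact hxynotA
  have hBA : I * J₂ ≤ I₂ ^ 2 + I * J₂ := by rw [Ideal.add_eq_sup]; exact le_sup_right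
  have e1 : gradedPiece k (I₂ ^ 2 + I * J₂) (I * J₂) =
      Submodule.span k {Ideal.Quotient.mk (I * J₂) (MvPowerSeries.X (1 : Fin (r + 2)) ^ 2)} := by
    rw [hA]
    apply graded_singleton
    intro q
    refine ⟨constantCoeff (R := k) q, ?_⟩
    rw [← sub_mul]
    exact Ideal.mul_mem_mul (hconst q) hy2J₂
  have e2 : gradedPiece k (I * I₂) (I₂ ^ 2 + I * J₂) =
      Submodule.span k {Ideal.Quotient.mk (I₂ ^ 2 + I * J₂)
        (MvPowerSeries.X (0 : Fin (r + 2)) * MvPowerSeries.X 1)} := by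
    rw [hT]
    apply graded_singleton
    intro q
    refine ⟨constantCoeff (R := k) q, ?_⟩
    rw [← sub_mul]
    exact hBA (Ideal.mul_mem_mul (hconst q) hxyJ₂)
  refine ⟨part1, ⟨e1, ?_⟩, ⟨e2, ?_⟩⟩
  · rw [e1]; exact finrank_span_singleton hv1ne
  · rw [e2]; exact finrank_span_singleton hv2ne
end

section
/- Set I_{n−1} = (x^{n−1}, y, z₁, …, z_r) and J_{n−1} = (x^{n−1}, xy, y², z₁, …, z_r). Then the quotient (I₂·I_{n−1})/(I₂·J_{n−1} + I_{n−1}·J₂) is a 1-dimensional k-vector space generated by the class of y². (This is the local form of the isomorphism K ⊗ K ≅ I₂I_{n−1}/(I₂J_{n−1} + I_{n−1}J₂) used in Step n+1 of the construction theorem for C_{2,n} structures.) -/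
open MvPowerSeries Finsupp
open scoped Pointwise

section AuxLemmas

variable {σ : Type} [DecidableEq σ] {K : Type} [Field K]

/-- The ideal of power series all of whose coefficients at monomials `≤ t` vanish. -/
def lowIdeal (σ : Type) [DecidableEq σ] (K : Type) [Field K] (t : σ →₀ ℕ) : Ideal (MvPowerSeries σ K) where
  carrier := {f | ∀ m : σ →₀ ℕ, m ≤ t → MvPowerSeries.coeff m f = 0}
  add_mem' := by
    intro f g hf hg m hm
    simp [map_add, hf m hm, hg m hm]
  zero_mem' := by intro m hm; simp
  smul_mem' := by
    intro c f hf m hm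
    rw [smul_eq_mul, MvPowerSeries.coeff_mul]
    apply Finset.sum_eq_zero
    rintro ⟨a, b⟩ hab
    rw [Finset.HasAntidiagonal.mem_antidiagonal] at hab
    have hb : b ≤ t := le_trans (hab ▸ le_add_self) hm
    rw [hf b hb, mul_zero]

lemma mem_lowIdeal {t : σ →₀ ℕ} {f : MvPowerSeries σ K} :
    f ∈ lowIdeal σ K t ↔ ∀ m : σ →₀ ℕ, m ≤ t → MvPowerSeries.coeff m f = 0 := Iff.rfl

lemma monomial_mem_lowIdeal {t e : σ →₀ ℕ} (h : ¬ e ≤ t) (c : K) :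
    MvPowerSeries.monomial e c ∈ lowIdeal σ K t := by
  rw [mem_lowIdeal]
  intro m hm
  rw [MvPowerSeries.coeff_monomial, if_neg]
  rintro rfl
  exact h hm

lemma le_single_classify {s : σ} {kk : ℕ} {c : σ →₀ ℕ} (h : c ≤ Finsupp.single s kk) :
    c = Finsupp.single s (c s) ∧ c s ≤ kk := by
  constructor
  · ext j
    rcases eq_or_ne j s with rfl | hj
    · simp
    · have := (Finsupp.le_def.mp h) j
      simp only [Finsupp.single_apply, if_neg (Ne.symm hj)] at this ⊢
      omega
  · simpa using (Finsupp.le_def.mp h) s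

lemma lowIdeal_mul_le (s : σ) :
    lowIdeal σ K 0 * lowIdeal σ K (Finsupp.single s 1) ≤ lowIdeal σ K (Finsupp.single s 2) := by
  rw [Ideal.mul_le]
  intro r hr f hf
  rw [mem_lowIdeal]
  intro m hm
  rw [MvPowerSeries.coeff_mul]
  apply Finset.sum_eq_zero
  rintro ⟨a, b⟩ hab
  rw [Finset.HasAntidiagonal.mem_antidiagonal] at hab
  have haM : a ≤ m := hab ▸ self_le_add_right a b
  have hbM : b ≤ m := hab ▸ le_add_self
  rcases Nat.eq_zero_or_pos (a s) with has | has
  · have ha0 : a = 0 := by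
      have := (le_single_classify (le_trans haM hm)).1
      rw [this, has, Finsupp.single_zero]
    rw [mem_lowIdeal.mp hr a (by rw [ha0]), zero_mul]
  · have hb1 : b ≤ Finsupp.single s 1 := by
      obtain ⟨hbe, hbs⟩ := le_single_classify (le_trans hbM hm)
      have hms : a s + b s = m s := by rw [← hab]; simp
      have hm2 : m s ≤ 2 := by simpa using (Finsupp.le_def.mp hm) s
      rw [hbe]
      exact Finsupp.single_le_iff.mpr (by simp [Finsupp.single_apply]; omega)
    rw [mem_lowIdeal.mp hf b hb1, mul_zero]

lemma mem_span_X_of_constCoeff_zero [Fintype σ] {g : MvPowerSeries σ K}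
    (h : MvPowerSeries.coeff 0 g = 0) :
    g ∈ Ideal.span (Set.range (MvPowerSeries.X : σ → MvPowerSeries σ K)) := by
  suffices H : ∀ s : Finset σ, ∀ g : MvPowerSeries σ K,
      (∀ e : σ →₀ ℕ, (∀ j ∈ s, e j = 0) → MvPowerSeries.coeff e g = 0) →
      g ∈ Ideal.span (Set.range (MvPowerSeries.X : σ → MvPowerSeries σ K)) by
    apply H Finset.univ g
    intro e he
    have he0 : e = 0 := by ext j; exact he j (Finset.mem_univ j)
    rwa [he0]
  intro s
  induction s using Finset.induction_on with
  | empty =>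
    intro g hg
    have : g = 0 := by
      apply MvPowerSeries.ext
      intro e
      simpa using hg e (by simp)
    simp [this]
  | @insert a s _ ih =>
    intro g hg
    set g' : MvPowerSeries σ K := fun e => if e a = 0 then MvPowerSeries.coeff e g else 0
      with hg'def
    have hcoeff : ∀ e, MvPowerSeries.coeff e g' =
        if e a = 0 then MvPowerSeries.coeff e g else 0 := fun e => rfl
    have hdvd : (MvPowerSeries.X a : MvPowerSeries σ K) ∣ g - g' := by
      rw [MvPowerSeries.X_dvd_iff]
      intro m hm
      simp [map_sub, hcoeff, hm]
    obtain ⟨q, hq⟩ := hdvd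
    have hgmem : g' ∈ Ideal.span (Set.range (MvPowerSeries.X : σ → MvPowerSeries σ K)) := by
      apply ih g'
      intro e he
      rw [hcoeff]
      split
      · apply hg e
        intro j hj
        rcases Finset.mem_insert.mp hj with rfl | hj'
        · assumption
        · exact he _ hj'
      · rfl
    have hsplit : g = g' + MvPowerSeries.X a * q := by
      rw [← hq]; ring
    rw [hsplit]
    exact Ideal.add_mem _ hgmem
      (Ideal.mul_mem_right _ _ (Ideal.subset_span ⟨a, rfl⟩))

end AuxLemmas

set_option maxHeartbeats 2000000 in
/-- In the local model of a `C_{2,n}` cuspidal structure, with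
`I_{n−1} = (x^{n−1}, y, z)` and `J_{n−1} = (x^{n−1}, xy, y², z)`, the subquotient
`(I₂·I_{n−1})/(I₂·J_{n−1} + I_{n−1}·J₂)` is a 1-dimensional `k`-vector space
generated by the class of `y²` (local form of
`K ⊗ K ≅ I₂I_{n−1}/(I₂J_{n−1} + I_{n−1}J₂)`). -/
theorem stmt_10 (k : Type) [Field k] (n r : ℕ) (hn : 3 ≤ n)
    (x y : MvPowerSeries (Fin (r + 2)) k) (z : Fin r → MvPowerSeries (Fin (r + 2)) k)
    (hx : x = MvPowerSeries.X 0) (hy : y = MvPowerSeries.X 1)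
    (hz : ∀ i : Fin r, z i = MvPowerSeries.X i.succ.succ)
    (I J I₂ J₂ Iₙ₁ Jₙ₁ : Ideal (MvPowerSeries (Fin (r + 2)) k))
    (hI : I = Ideal.span ({x, y} ∪ Set.range z))
    (hJ : J = Ideal.span ({y ^ 2 + x ^ n, x * y} ∪ Set.range z))
    (hI₂ : I₂ = Ideal.span ({x ^ 2, y} ∪ Set.range z))
    (hJ₂ : J₂ = Ideal.span ({x ^ 2, x * y, y ^ 2} ∪ Set.range z))
    (hIₙ₁ : Iₙ₁ = Ideal.span ({x ^ (n - 1), y} ∪ Set.range z))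
    (hJₙ₁ : Jₙ₁ = Ideal.span ({x ^ (n - 1), x * y, y ^ 2} ∪ Set.range z)) :
    gradedPiece k (I₂ * Iₙ₁) (I₂ * Jₙ₁ + Iₙ₁ * J₂) =
      Submodule.span k {Ideal.Quotient.mk (I₂ * Jₙ₁ + Iₙ₁ * J₂) (y ^ 2)} ∧
    Module.finrank k (gradedPiece k (I₂ * Iₙ₁) (I₂ * Jₙ₁ + Iₙ₁ * J₂)) = 1 := by
  classical
  -- monomial descriptions of the generators
  have hx2 : x ^ 2 = MvPowerSeries.monomial (Finsupp.single (0 : Fin (r + 2)) 2) 1 := by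
    rw [hx, MvPowerSeries.X_pow_eq]
  have hxn : x ^ (n - 1) = MvPowerSeries.monomial (Finsupp.single (0 : Fin (r + 2)) (n - 1)) 1 := by
    rw [hx, MvPowerSeries.X_pow_eq]
  have hy1 : y = MvPowerSeries.monomial (Finsupp.single (1 : Fin (r + 2)) 1) 1 := by
    rw [hy, MvPowerSeries.X_def]
  have hy2 : y ^ 2 = MvPowerSeries.monomial (Finsupp.single (1 : Fin (r + 2)) 2) 1 := by
    rw [hy, MvPowerSeries.X_pow_eq]
  have hxy : x * y =
      MvPowerSeries.monomial (Finsupp.single (0 : Fin (r + 2)) 1 + Finsupp.single (1 : Fin (r + 2)) 1) 1 := by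
    rw [hx, hy, MvPowerSeries.X_def, MvPowerSeries.X_def,
      MvPowerSeries.monomial_mul_monomial, one_mul]
  have hzi : ∀ i : Fin r, z i =
      MvPowerSeries.monomial (Finsupp.single (i.succ.succ : Fin (r + 2)) 1) 1 := by
    intro i; rw [hz i, MvPowerSeries.X_def]
  have h01 : (0 : Fin (r + 2)) ≠ 1 := by
    intro h; have := congrArg Fin.val h; simp at this
  have hss1 : ∀ i : Fin r, (i.succ.succ : Fin (r + 2)) ≠ 1 := by
    intro i h; have := congrArg Fin.val h; simp [Fin.val_succ] at this
  -- basic non-inequalities between monomials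
  have hnotle : ∀ (u : Fin (r + 2)) (p : ℕ) (t : Fin (r + 2) →₀ ℕ), t u < p → ¬ Finsupp.single u p ≤ t := by
    intro u p t h hle
    have := (Finsupp.le_def.mp hle) u
    simp at this
    omega
  -- U = lowIdeal 0, V = lowIdeal (single 1 1), Kid = lowIdeal (single 1 2)
  have hI₂U : I₂ ≤ lowIdeal (Fin (r + 2)) k 0 := by
    rw [hI₂, Ideal.span_le]
    intro p hp
    simp only [Set.mem_union, Set.mem_insert_iff, Set.mem_singleton_iff, Set.mem_range] at hp
    rcases hp with (rfl | rfl) | ⟨i, rfl⟩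
    · rw [hx2]; exact monomial_mem_lowIdeal (hnotle _ _ _ (by simp)) 1
    · rw [hy1]; exact monomial_mem_lowIdeal (hnotle _ _ _ (by simp)) 1
    · rw [hzi i]; exact monomial_mem_lowIdeal (hnotle _ _ _ (by simp)) 1
  have hIₙU : Iₙ₁ ≤ lowIdeal (Fin (r + 2)) k 0 := by
    rw [hIₙ₁, Ideal.span_le]
    intro p hp
    simp only [Set.mem_union, Set.mem_insert_iff, Set.mem_singleton_iff, Set.mem_range] at hp
    rcases hp with (rfl | rfl) | ⟨i, rfl⟩
    · rw [hxn]; exact monomial_mem_lowIdeal (hnotle _ _ _ (by simp; omega)) 1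
    · rw [hy1]; exact monomial_mem_lowIdeal (hnotle _ _ _ (by simp)) 1
    · rw [hzi i]; exact monomial_mem_lowIdeal (hnotle _ _ _ (by simp)) 1
  have hJₙV : Jₙ₁ ≤ lowIdeal (Fin (r + 2)) k (Finsupp.single (1 : Fin (r + 2)) 1) := by
    rw [hJₙ₁, Ideal.span_le]
    intro p hp
    simp only [Set.mem_union, Set.mem_insert_iff, Set.mem_singleton_iff, Set.mem_range] at hp
    rcases hp with (rfl | rfl | rfl) | ⟨i, rfl⟩
    · rw [hxn]
      refine monomial_mem_lowIdeal (hnotle 0 (n - 1) _ ?_) 1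
      simp [Finsupp.single_apply, h01.symm]; omega
    · rw [hxy]
      refine monomial_mem_lowIdeal ?_ 1
      intro hle
      have := (Finsupp.le_def.mp hle) 0
      simp [Finsupp.single_apply, h01, h01.symm] at this
    · rw [hy2]
      exact monomial_mem_lowIdeal (hnotle 1 2 _ (by simp)) 1
    · rw [hzi i]
      refine monomial_mem_lowIdeal (hnotle i.succ.succ 1 _ ?_) 1
      simp [Finsupp.single_apply, (hss1 i).symm]
  have hJ₂V : J₂ ≤ lowIdeal (Fin (r + 2)) k (Finsupp.single (1 : Fin (r + 2)) 1) := by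
    rw [hJ₂, Ideal.span_le]
    intro p hp
    simp only [Set.mem_union, Set.mem_insert_iff, Set.mem_singleton_iff, Set.mem_range] at hp
    rcases hp with (rfl | rfl | rfl) | ⟨i, rfl⟩
    · rw [hx2]
      refine monomial_mem_lowIdeal (hnotle 0 2 _ ?_) 1
      simp [Finsupp.single_apply, h01.symm]
    · rw [hxy]
      refine monomial_mem_lowIdeal ?_ 1
      intro hle
      have := (Finsupp.le_def.mp hle) 0
      simp [Finsupp.single_apply, h01, h01.symm] at this
    · rw [hy2]
      exact monomial_mem_lowIdeal (hnotle 1 2 _ (by simp)) 1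
    · rw [hzi i]
      refine monomial_mem_lowIdeal (hnotle i.succ.succ 1 _ ?_) 1
      simp [Finsupp.single_apply, (hss1 i).symm]
  have hBK : I₂ * Jₙ₁ + Iₙ₁ * J₂ ≤ lowIdeal (Fin (r + 2)) k (Finsupp.single (1 : Fin (r + 2)) 2) := by
    rw [Ideal.add_eq_sup]
    apply sup_le
    · exact le_trans (Ideal.mul_mono hI₂U hJₙV) (lowIdeal_mul_le 1)
    · exact le_trans (Ideal.mul_mono hIₙU hJ₂V) (lowIdeal_mul_le 1)
  have hy2notB : y ^ 2 ∉ I₂ * Jₙ₁ + Iₙ₁ * J₂ := by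
    intro hmem
    have := mem_lowIdeal.mp (hBK hmem) (Finsupp.single (1 : Fin (r + 2)) 2) le_rfl
    rw [hy2, MvPowerSeries.coeff_monomial, if_pos rfl] at this
    exact one_ne_zero this
  -- generator memberships
  have hx2I₂ : x ^ 2 ∈ I₂ := by rw [hI₂]; exact Ideal.subset_span (by simp)
  have hyI₂ : y ∈ I₂ := by rw [hI₂]; exact Ideal.subset_span (by simp)
  have hzI₂ : ∀ i, z i ∈ I₂ := fun i => by rw [hI₂]; exact Ideal.subset_span (by simp)
  have hyIₙ : y ∈ Iₙ₁ := by rw [hIₙ₁]; exact Ideal.subset_span (by simp)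
  have hxnJₙ : x ^ (n - 1) ∈ Jₙ₁ := by rw [hJₙ₁]; exact Ideal.subset_span (by simp)
  have hxyJₙ : x * y ∈ Jₙ₁ := by rw [hJₙ₁]; exact Ideal.subset_span (by simp)
  have hy2Jₙ : y ^ 2 ∈ Jₙ₁ := by rw [hJₙ₁]; exact Ideal.subset_span (by simp)
  have hzJₙ : ∀ i, z i ∈ Jₙ₁ := fun i => by rw [hJₙ₁]; exact Ideal.subset_span (by simp)
  have hx2J₂ : x ^ 2 ∈ J₂ := by rw [hJ₂]; exact Ideal.subset_span (by simp)
  have hzJ₂ : ∀ i, z i ∈ J₂ := fun i => by rw [hJ₂]; exact Ideal.subset_span (by simp)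
  -- A ≤ B + (y²)
  have hy2A : y ^ 2 ∈ I₂ * Iₙ₁ := by
    rw [pow_two]
    exact Ideal.mul_mem_mul hyI₂ hyIₙ
  have hAle : I₂ * Iₙ₁ ≤ I₂ * Jₙ₁ + Iₙ₁ * J₂ + Ideal.span {y ^ 2} := by
    have hPmem : ∀ w ∈ I₂ * Jₙ₁, w ∈ I₂ * Jₙ₁ + Iₙ₁ * J₂ + Ideal.span {y ^ 2} := by
      intro w hw
      rw [Ideal.add_eq_sup, Ideal.add_eq_sup]
      exact Submodule.mem_sup_left (Submodule.mem_sup_left hw)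
    have hQmem : ∀ w ∈ Iₙ₁ * J₂, w ∈ I₂ * Jₙ₁ + Iₙ₁ * J₂ + Ideal.span {y ^ 2} := by
      intro w hw
      rw [Ideal.add_eq_sup, Ideal.add_eq_sup]
      exact Submodule.mem_sup_left (Submodule.mem_sup_right hw)
    have hYmem : ∀ w ∈ Ideal.span ({y ^ 2} : Set (MvPowerSeries (Fin (r + 2)) k)),
        w ∈ I₂ * Jₙ₁ + Iₙ₁ * J₂ + Ideal.span {y ^ 2} := by
      intro w hw
      rw [Ideal.add_eq_sup]
      exact Submodule.mem_sup_right hw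
    have heq : I₂ * Iₙ₁ =
        Ideal.span ((({x ^ 2, y} ∪ Set.range z) : Set (MvPowerSeries (Fin (r + 2)) k)) *
          ({x ^ (n - 1), y} ∪ Set.range z)) := by
      rw [hI₂, hIₙ₁, Ideal.span_mul_span']
    rw [heq, Ideal.span_le]
    intro p hp
    rw [Set.mem_mul] at hp
    obtain ⟨a, ha, b, hb, rfl⟩ := hp
    simp only [Set.mem_union, Set.mem_insert_iff, Set.mem_singleton_iff, Set.mem_range] at ha hb
    rcases ha with (rfl | rfl) | ⟨i, rfl⟩ <;> rcases hb with (rfl | rfl) | ⟨j, rfl⟩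
    · exact hPmem _ (Ideal.mul_mem_mul hx2I₂ hxnJₙ)
    · rw [mul_comm (x ^ 2)]
      exact hQmem _ (Ideal.mul_mem_mul hyIₙ hx2J₂)
    · exact hPmem _ (Ideal.mul_mem_mul hx2I₂ (hzJₙ j))
    · exact hPmem _ (Ideal.mul_mem_mul hyI₂ hxnJₙ)
    · exact hYmem _ (by rw [← pow_two]; exact Ideal.subset_span rfl)
    · exact hPmem _ (Ideal.mul_mem_mul hyI₂ (hzJₙ j))
    · exact hPmem _ (Ideal.mul_mem_mul (hzI₂ i) hxnJₙ)
    · rw [mul_comm (z i)]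
      exact hQmem _ (Ideal.mul_mem_mul hyIₙ (hzJ₂ i))
    · exact hPmem _ (Ideal.mul_mem_mul (hzI₂ i) (hzJₙ j))
  -- (span of variables) * (y²) ≤ B
  have hXy2 : ∀ u : Fin (r + 2), MvPowerSeries.X u * y ^ 2 ∈ I₂ * Jₙ₁ + Iₙ₁ * J₂ := by
    intro u
    have hmemP : ∀ w ∈ I₂ * Jₙ₁, w ∈ I₂ * Jₙ₁ + Iₙ₁ * J₂ := by
      intro w hw; rw [Ideal.add_eq_sup]; exact Submodule.mem_sup_left hw
    rcases Fin.eq_zero_or_eq_succ u with rfl | ⟨u', rfl⟩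
    · have : MvPowerSeries.X (0 : Fin (r + 2)) * y ^ 2 = y * (x * y) := by rw [hx]; ring
      rw [this]
      exact hmemP _ (Ideal.mul_mem_mul hyI₂ hxyJₙ)
    · rcases Fin.eq_zero_or_eq_succ u' with rfl | ⟨i, rfl⟩
      · have : MvPowerSeries.X ((0 : Fin (r + 1)).succ) * y ^ 2 = y * y ^ 2 := by
          rw [hy, Fin.succ_zero_eq_one]
        rw [this]
        exact hmemP _ (Ideal.mul_mem_mul hyI₂ hy2Jₙ)
      · have : MvPowerSeries.X (i.succ.succ) * y ^ 2 = z i * y ^ 2 := by rw [hz i]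
        rw [this]
        exact hmemP _ (Ideal.mul_mem_mul (hzI₂ i) hy2Jₙ)
  have hXspan : Ideal.span (Set.range (MvPowerSeries.X : Fin (r + 2) → MvPowerSeries (Fin (r + 2)) k)) * Ideal.span {y ^ 2} ≤
      I₂ * Jₙ₁ + Iₙ₁ * J₂ := by
    rw [Ideal.span_mul_span', Ideal.span_le]
    intro p hp
    rw [Set.mem_mul] at hp
    obtain ⟨a, ⟨u, rfl⟩, b, hb, rfl⟩ := hp
    rw [Set.mem_singleton_iff] at hb
    subst hb
    exact hXy2 u
  -- main computation
  have hmain : gradedPiece k (I₂ * Iₙ₁) (I₂ * Jₙ₁ + Iₙ₁ * J₂) =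
      Submodule.span k {Ideal.Quotient.mk (I₂ * Jₙ₁ + Iₙ₁ * J₂) (y ^ 2)} := by
    apply le_antisymm
    · intro ξ hξ
      have hξ' : ξ ∈ (I₂ * Iₙ₁).map (Ideal.Quotient.mk (I₂ * Jₙ₁ + Iₙ₁ * J₂)) := hξ
      obtain ⟨a, haA, rfl⟩ :=
        (Ideal.mem_map_iff_of_surjective _ Ideal.Quotient.mk_surjective).mp hξ'
      have haBY := hAle haA
      rw [Ideal.add_eq_sup, Submodule.mem_sup] at haBY
      obtain ⟨b, hb, c, hc, rfl⟩ := haBY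
      rw [Ideal.mem_span_singleton'] at hc
      obtain ⟨f, rfl⟩ := hc
      set c0 := MvPowerSeries.coeff (0 : Fin (r + 2) →₀ ℕ) f with hc0
      have hgX : f - MvPowerSeries.C c0 ∈
          Ideal.span (Set.range (MvPowerSeries.X : Fin (r + 2) → MvPowerSeries (Fin (r + 2)) k)) := by
        apply mem_span_X_of_constCoeff_zero
        simp [map_sub, MvPowerSeries.coeff_zero_C, hc0]
      have hkey : (f - MvPowerSeries.C c0) * y ^ 2 ∈ I₂ * Jₙ₁ + Iₙ₁ * J₂ :=
        hXspan (Ideal.mul_mem_mul hgX (Ideal.subset_span rfl))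
      have hcalc : Ideal.Quotient.mk (I₂ * Jₙ₁ + Iₙ₁ * J₂) (b + f * y ^ 2) =
          c0 • Ideal.Quotient.mk (I₂ * Jₙ₁ + Iₙ₁ * J₂) (y ^ 2) := by
        have hsub : b + f * y ^ 2 - (MvPowerSeries.C c0) * y ^ 2 ∈
            I₂ * Jₙ₁ + Iₙ₁ * J₂ := by
          have : b + f * y ^ 2 - (MvPowerSeries.C c0) * y ^ 2 =
              b + (f - MvPowerSeries.C c0) * y ^ 2 := by ring
          rw [this]
          exact Ideal.add_mem _ hb hkey
        have h1 : Ideal.Quotient.mk (I₂ * Jₙ₁ + Iₙ₁ * J₂) (b + f * y ^ 2) =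
            Ideal.Quotient.mk (I₂ * Jₙ₁ + Iₙ₁ * J₂) ((MvPowerSeries.C c0) * y ^ 2) :=
          Ideal.Quotient.mk_eq_mk_iff_sub_mem _ _ |>.mpr hsub
        rw [h1, ← MvPowerSeries.smul_eq_C_mul]
        exact map_smul (Ideal.Quotient.mkₐ k (I₂ * Jₙ₁ + Iₙ₁ * J₂)) c0 (y ^ 2)
      rw [hcalc]
      exact Submodule.smul_mem _ _ (Submodule.mem_span_singleton_self _)
    · rw [Submodule.span_le]
      intro ξ hξ
      rw [Set.mem_singleton_iff] at hξ
      subst hξ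
      exact Ideal.mem_map_of_mem _ hy2A
  refine ⟨hmain, ?_⟩
  rw [hmain]
  have hne : Ideal.Quotient.mk (I₂ * Jₙ₁ + Iₙ₁ * J₂) (y ^ 2) ≠ 0 := by
    intro h0
    exact hy2notB (Ideal.Quotient.eq_zero_iff_mem.mp h0)
  exact finrank_span_singleton hne
end

section
/- I^{n+1} ⊆ J but I^n ⊄ J. (Thus, in the notation of the paper, the integer m with I^m ⊄ J and I^{m+1} ⊆ J equals n for the local model of a cuspidal structure of type C_{3,n}.) -/
open MvPowerSeries Finsupp

section Aux

variable {k : Type} [Field k] {r : ℕ}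

/-- Every element of the ideal generated by the `z`-variables has vanishing
coefficients at monomials supported away from the `z`-variables. -/
lemma coeff_zero_of_mem_zspan (z : Fin r → MvPowerSeries (Fin (r + 2)) k)
    (hz : ∀ i : Fin r, z i = MvPowerSeries.X i.succ.succ)
    {w : MvPowerSeries (Fin (r + 2)) k} (hw : w ∈ Ideal.span (Set.range z))
    (m : Fin (r + 2) →₀ ℕ) (hm : ∀ i : Fin r, m i.succ.succ = 0) :
    MvPowerSeries.coeff m w = 0 := by
  classical
  induction hw using Submodule.span_induction generalizing m with
  | mem f hf =>
    obtain ⟨i, rfl⟩ := hf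
    rw [hz i]
    rw [MvPowerSeries.coeff_X]
    split_ifs with h
    · exfalso
      have := hm i
      rw [h, Finsupp.single_apply, if_pos rfl] at this
      exact one_ne_zero this
    · rfl
  | zero => simp
  | add f g _ _ hf hg => simp [map_add, hf m hm, hg m hm]
  | smul c f _ hf =>
    rw [smul_eq_mul, MvPowerSeries.coeff_mul]
    apply Finset.sum_eq_zero
    intro p hp
    rw [Finset.HasAntidiagonal.mem_antidiagonal] at hp
    have h2 : ∀ i : Fin r, p.2 i.succ.succ = 0 := by
      intro i
      have h3 := hm i
      have h4 : p.1 i.succ.succ + p.2 i.succ.succ = 0 := by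
        rw [← Finsupp.add_apply, hp]; exact h3
      omega
    rw [hf p.2 h2, mul_zero]

/-- Powers of the ideal `(x, y)`. -/
lemma span_pair_pow_le (x y : MvPowerSeries (Fin (r + 2)) k) (m : ℕ) :
    Ideal.span {x, y} ^ (m + 1) ≤ Ideal.span {x ^ (m + 1), y ^ (m + 1), x * y} := by
  induction m with
  | zero =>
    rw [pow_one, Ideal.span_le]
    rintro a (rfl | rfl)
    · exact Ideal.subset_span (by simp)
    · exact Ideal.subset_span (by simp)
  | succ m ih =>
    calc Ideal.span {x, y} ^ (m + 1 + 1)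
        = Ideal.span {x, y} ^ (m + 1) * Ideal.span {x, y} := pow_succ _ (m + 1)
      _ ≤ Ideal.span {x ^ (m + 1), y ^ (m + 1), x * y} * Ideal.span {x, y} :=
          Ideal.mul_mono_left ih
      _ ≤ Ideal.span {x ^ (m + 1 + 1), y ^ (m + 1 + 1), x * y} := by
          rw [Ideal.span_mul_span', Ideal.span_le, Set.mul_subset_iff]
          intro a ha b hb
          simp only [Set.mem_insert_iff, Set.mem_singleton_iff] at ha hb
          rcases ha with ha | ha | ha <;> rcases hb with hb | hb <;> rw [ha, hb]
          · rw [show x ^ (m + 1) * x = x ^ (m + 1 + 1) by ring]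
            exact Ideal.subset_span (by simp)
          · rw [show x ^ (m + 1) * y = x ^ m * (x * y) by ring]
            exact Ideal.mul_mem_left _ _ (Ideal.subset_span (by simp))
          · rw [show y ^ (m + 1) * x = y ^ m * (x * y) by ring]
            exact Ideal.mul_mem_left _ _ (Ideal.subset_span (by simp))
          · rw [show y ^ (m + 1) * y = y ^ (m + 1 + 1) by ring]
            exact Ideal.subset_span (by simp)
          · exact Ideal.mul_mem_right _ _ (Ideal.subset_span (by simp))
          · exact Ideal.mul_mem_right _ _ (Ideal.subset_span (by simp))

lemma sup_pow_le {R : Type*} [CommRing R] (A Z : Ideal R) (m : ℕ) :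
    (A ⊔ Z) ^ (m + 1) ≤ A ^ (m + 1) ⊔ Z := by
  induction m with
  | zero => simp
  | succ m ih =>
    calc (A ⊔ Z) ^ (m + 1 + 1) = (A ⊔ Z) ^ (m + 1) * (A ⊔ Z) := pow_succ _ _
      _ ≤ (A ^ (m + 1) ⊔ Z) * (A ⊔ Z) := Ideal.mul_mono_left ih
      _ = A ^ (m + 1) * A ⊔ A ^ (m + 1) * Z ⊔ (Z * A ⊔ Z * Z) := by
          rw [Ideal.sup_mul, Ideal.mul_sup, Ideal.mul_sup]
      _ ≤ A ^ (m + 1 + 1) ⊔ Z := by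
          apply sup_le
          · apply sup_le
            · rw [← pow_succ]; exact le_sup_left
            · exact le_trans Ideal.mul_le_right le_sup_right
          · exact sup_le (le_trans Ideal.mul_le_left le_sup_right)
              (le_trans Ideal.mul_le_left le_sup_right)

end Aux

/-- For the local model `J = (y³ + xⁿ, xy, z₁, …, z_r)` of a cuspidal multiple
structure of type `C_{3,n}` (with `n ≥ 4`) on the smooth germ cut out by
`I = (x, y, z₁, …, z_r)` in `R = k[[x, y, z₁, …, z_r]]`, one has
`I^(n+1) ⊆ J` but `I^n ⊄ J`. -/
theorem stmt_11 (k : Type) [Field k] (n r : ℕ) (hn : 4 ≤ n)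
    (x y : MvPowerSeries (Fin (r + 2)) k) (z : Fin r → MvPowerSeries (Fin (r + 2)) k)
    (hx : x = MvPowerSeries.X 0) (hy : y = MvPowerSeries.X 1)
    (hz : ∀ i : Fin r, z i = MvPowerSeries.X i.succ.succ)
    (I J : Ideal (MvPowerSeries (Fin (r + 2)) k))
    (hI : I = Ideal.span ({x, y} ∪ Set.range z))
    (hJ : J = Ideal.span ({y ^ 3 + x ^ n, x * y} ∪ Set.range z)) :
    I ^ (n + 1) ≤ J ∧ ¬ I ^ n ≤ J := by
  classical
  have hg1J : y ^ 3 + x ^ n ∈ J := by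
    rw [hJ]; exact Ideal.subset_span (Or.inl (Set.mem_insert _ _))
  have hg2J : x * y ∈ J := by
    rw [hJ]; exact Ideal.subset_span (Or.inl (Set.mem_insert_of_mem _ rfl))
  have hZJ : Ideal.span (Set.range z) ≤ J := by
    rw [hJ]
    exact Ideal.span_mono Set.subset_union_right
  have hIsup : I = Ideal.span {x, y} ⊔ Ideal.span (Set.range z) := by
    rw [hI, Ideal.span_union]
  constructor
  · -- positive direction
    obtain ⟨m0, hm0⟩ : ∃ m0, n = m0 + 4 := ⟨n - 4, by omega⟩
    subst hm0
    have hxJ : x ^ (m0 + 4 + 1) ∈ J := by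
      rw [show x ^ (m0 + 4 + 1) = x * (y ^ 3 + x ^ (m0 + 4)) - y ^ 2 * (x * y) by ring]
      exact sub_mem (J.mul_mem_left _ hg1J) (J.mul_mem_left _ hg2J)
    have hyJ : y ^ (m0 + 4 + 1) ∈ J := by
      rw [show y ^ (m0 + 4 + 1) =
          y ^ (m0 + 2) * (y ^ 3 + x ^ (m0 + 4)) - x ^ (m0 + 3) * y ^ (m0 + 1) * (x * y) by ring]
      exact sub_mem (J.mul_mem_left _ hg1J) (J.mul_mem_left _ hg2J)
    rw [hIsup]
    refine le_trans (sup_pow_le _ _ (m0 + 4))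
      (sup_le (le_trans (span_pair_pow_le x y (m0 + 4)) ?_) hZJ)
    rw [Ideal.span_le]
    rintro a (rfl | rfl | rfl)
    · exact hxJ
    · exact hyJ
    · exact hg2J
  · -- negative direction
    intro hle
    have hxI : x ∈ I := by
      rw [hI]; exact Ideal.subset_span (Or.inl (Set.mem_insert _ _))
    have hxnJ : x ^ n ∈ J := hle (Ideal.pow_mem_pow hxI n)
    have h01 : (0 : Fin (r + 2)) ≠ 1 := by
      simp [Fin.ext_iff]
    -- key: for f ∈ J, coeff (single 0 n) f = coeff (single 1 3) f
    have key : ∀ f ∈ J, MvPowerSeries.coeff (Finsupp.single 0 n) f =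
        MvPowerSeries.coeff (Finsupp.single 1 3) f := by
      intro f hf
      rw [hJ] at hf
      have hdecomp : ({y ^ 3 + x ^ n, x * y} : Set (MvPowerSeries (Fin (r + 2)) k))
          ∪ Set.range z = insert (y ^ 3 + x ^ n) (insert (x * y) (Set.range z)) := by
        simp [Set.insert_union]
      rw [hdecomp, Ideal.span_insert, Ideal.span_insert] at hf
      obtain ⟨u, hu, v, hv, rfl⟩ := Submodule.mem_sup.mp hf
      obtain ⟨v1, hv1, w, hw, rfl⟩ := Submodule.mem_sup.mp hv
      obtain ⟨c, rfl⟩ := Ideal.mem_span_singleton.mp hu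
      obtain ⟨d, rfl⟩ := Ideal.mem_span_singleton.mp hv1
      have hnle1 : ¬ Finsupp.single (1 : Fin (r + 2)) 3 ≤ Finsupp.single 0 n := by
        intro h
        have h' := h 1
        rw [Finsupp.single_apply, Finsupp.single_apply, if_pos rfl, if_neg h01] at h'
        omega
      have hnle2 : ¬ Finsupp.single (0 : Fin (r + 2)) n ≤ Finsupp.single 1 3 := by
        intro h
        have h' := h 0
        rw [Finsupp.single_apply, Finsupp.single_apply, if_pos rfl,
          if_neg (Ne.symm h01)] at h'
        omega
      have hxyeq : x * y = MvPowerSeries.monomial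
          (Finsupp.single 0 1 + Finsupp.single 1 1) 1 := by
        rw [hx, hy, MvPowerSeries.X_def, MvPowerSeries.X_def,
          MvPowerSeries.monomial_mul_monomial, one_mul]
      have hnlexy1 : ¬ Finsupp.single (0 : Fin (r + 2)) 1 + Finsupp.single 1 1 ≤
          Finsupp.single 0 n := by
        intro h
        have h' := h 1
        rw [Finsupp.add_apply, Finsupp.single_apply, Finsupp.single_apply,
          Finsupp.single_apply, if_pos rfl, if_neg h01, if_neg h01] at h'
        omega
      have hnlexy2 : ¬ Finsupp.single (0 : Fin (r + 2)) 1 + Finsupp.single 1 1 ≤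
          Finsupp.single 1 3 := by
        intro h
        have h' := h 0
        rw [Finsupp.add_apply, Finsupp.single_apply, Finsupp.single_apply,
          Finsupp.single_apply, if_pos rfl, if_neg (Ne.symm h01), if_neg (Ne.symm h01)] at h'
        omega
      have hg1 : ∀ m : Fin (r + 2) →₀ ℕ,
          MvPowerSeries.coeff m ((y ^ 3 + x ^ n) * c) =
            (if Finsupp.single (1 : Fin (r + 2)) 3 ≤ m then
              MvPowerSeries.coeff (m - Finsupp.single 1 3) c else 0) +
            (if Finsupp.single (0 : Fin (r + 2)) n ≤ m then
              MvPowerSeries.coeff (m - Finsupp.single 0 n) c else 0) := by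
        intro m
        rw [hx, hy, MvPowerSeries.X_pow_eq, MvPowerSeries.X_pow_eq, add_mul, map_add,
          MvPowerSeries.coeff_monomial_mul, MvPowerSeries.coeff_monomial_mul]
        simp
      have hsucc1 : ∀ i : Fin r, (Finsupp.single (0 : Fin (r + 2)) n) i.succ.succ = 0 := by
        intro i
        rw [Finsupp.single_apply, if_neg]
        intro h
        have h' : (0 : Fin (r + 2)).val = (i.succ.succ : Fin (r + 2)).val := by rw [h]
        simp [Fin.val_succ] at h'
      have hsucc2 : ∀ i : Fin r, (Finsupp.single (1 : Fin (r + 2)) 3) i.succ.succ = 0 := by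
        intro i
        rw [Finsupp.single_apply, if_neg]
        intro h
        have h' : (1 : Fin (r + 2)).val = (i.succ.succ : Fin (r + 2)).val := by rw [h]
        simp [Fin.val_succ, Fin.val_one] at h'
      rw [map_add, map_add, map_add, map_add]
      rw [hg1 (Finsupp.single 0 n), hg1 (Finsupp.single 1 3), hxyeq,
        MvPowerSeries.coeff_monomial_mul, MvPowerSeries.coeff_monomial_mul,
        if_neg hnlexy1, if_neg hnlexy2, if_neg hnle1, if_neg hnle2,
        if_pos (le_refl (Finsupp.single (0 : Fin (r + 2)) n)),
        if_pos (le_refl (Finsupp.single (1 : Fin (r + 2)) 3)),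
        coeff_zero_of_mem_zspan z hz hw _ hsucc1,
        coeff_zero_of_mem_zspan z hz hw _ hsucc2]
      simp
    have hc := key (x ^ n) hxnJ
    rw [hx, MvPowerSeries.coeff_X_pow, MvPowerSeries.coeff_X_pow] at hc
    rw [if_pos rfl, if_neg] at hc
    · exact one_ne_zero hc
    · intro h
      have h' : Finsupp.single (1 : Fin (r + 2)) 3 0 = Finsupp.single (0 : Fin (r + 2)) n 0 := by
        rw [h]
      rw [Finsupp.single_apply, Finsupp.single_apply, if_pos rfl, if_neg (Ne.symm h01)] at h'
      omega
end

section
/- The quotient ring R/J is a finite-dimensional k-vector space of dimension n + 3, with basis given by the classes of 1, x, x², …, xⁿ, y, y². (Hence the local model of a cuspidal multiple structure of type C_{3,n} has multiplicity n + 3.) -/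
open MvPowerSeries Finsupp

namespace Stmt12Aux
variable {k : Type} [Field k] {r : ℕ}

lemma fin_cases' (j : Fin (r+2)) : j = 0 ∨ j = 1 ∨ ∃ i : Fin r, j = i.succ.succ := by
  rcases j with ⟨v, hv⟩
  match v with
  | 0 => exact Or.inl rfl
  | 1 => exact Or.inr (Or.inl rfl)
  | (m+2) =>
    refine Or.inr (Or.inr ⟨⟨m, by omega⟩, ?_⟩)
    simp [Fin.ext_iff]

lemma ss_ne_zero (i : Fin r) : (i.succ.succ : Fin (r+2)) ≠ 0 := Fin.succ_ne_zero _

lemma ss_ne_one (i : Fin r) : (i.succ.succ : Fin (r+2)) ≠ 1 := by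
  intro h
  have : (i.succ.succ : Fin (r+2)).val = (1 : Fin (r+2)).val := by rw [h]
  simp [Fin.val_succ] at this

lemma zero_ne_one' : (0 : Fin (r+2)) ≠ 1 := by simp [Fin.ext_iff]

lemma eq_single0 (e : Fin (r+2) →₀ ℕ) (hP : ∀ i : Fin r, e i.succ.succ = 0)
    (h1 : e 1 = 0) : e = single (0 : Fin (r+2)) (e 0) := by
  ext j
  rcases fin_cases' j with h | h | ⟨i, h⟩ <;> subst h
  · simp [single_apply]
  · simp [single_apply, zero_ne_one', h1]
  · simp [single_apply, (ss_ne_zero i).symm, hP i]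

lemma eq_single1 (e : Fin (r+2) →₀ ℕ) (hP : ∀ i : Fin r, e i.succ.succ = 0)
    (h0 : e 0 = 0) : e = single (1 : Fin (r+2)) (e 1) := by
  ext j
  rcases fin_cases' j with h | h | ⟨i, h⟩ <;> subst h
  · simp [single_apply, zero_ne_one', h0]
  · simp [single_apply]
  · simp [single_apply, (ss_ne_one i).symm, hP i]

lemma add_single_le {a b : Fin (r+2)} (hab : a ≠ b) (m l : ℕ) (e : Fin (r+2) →₀ ℕ) :
    single a m + single b l ≤ e ↔ m ≤ e a ∧ l ≤ e b := by
  rw [Finsupp.le_def]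
  constructor
  · intro h
    constructor
    · have := h a; simpa [single_apply, hab, Ne.symm hab] using this
    · have := h b; simpa [single_apply, hab, Ne.symm hab] using this
  · rintro ⟨h1, h2⟩ j
    by_cases hja : j = a
    · subst hja; simpa [single_apply, hab, Ne.symm hab] using h1
    · by_cases hjb : j = b
      · subst hjb; simpa [single_apply, hab, Ne.symm hab] using h2
      · simp [single_apply, Ne.symm hja, Ne.symm hjb]

-- coordinates of e - single
lemma sub_single_apply (e : Fin (r+2) →₀ ℕ) (s j : Fin (r+2)) (m : ℕ) (h : s ≠ j) :
    (e - single s m) j = e j := by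
  rw [Finsupp.tsub_apply, single_apply, if_neg h]; rfl

lemma master (n : ℕ) (hn : 4 ≤ n) (f : MvPowerSeries (Fin (r+2)) k) :
    f - ((∑ a ∈ Finset.range (n+1), coeff (R := k) (single 0 a) f • (X 0 : MvPowerSeries (Fin (r+2)) k) ^ a)
        + coeff (R := k) (single 1 1) f • X 1 ^ 1 + coeff (R := k) (single 1 2) f • X 1 ^ 2
        - coeff (R := k) (single 1 3) f • X 0 ^ n)
    ∈ Ideal.span ({(X 1 : MvPowerSeries (Fin (r+2)) k) ^ 3 + X 0 ^ n, X 0 * X 1}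
        ∪ Set.range (fun i : Fin r => (X i.succ.succ : MvPowerSeries (Fin (r+2)) k))) := by
  classical
  set S := Ideal.span ({(X 1 : MvPowerSeries (Fin (r+2)) k) ^ 3 + X 0 ^ n, X 0 * X 1}
      ∪ Set.range (fun i : Fin r => (X i.succ.succ : MvPowerSeries (Fin (r+2)) k))) with hS
  set A' : MvPowerSeries (Fin (r+2)) k :=
    fun e => if (∀ i : Fin r, e i.succ.succ = 0) ∧ e 1 = 0 then coeff (R := k) (e + single 0 (n+1)) f else 0 with hA
  set B' : MvPowerSeries (Fin (r+2)) k :=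
    fun e => if (∀ i : Fin r, e i.succ.succ = 0) ∧ e 0 = 0 then coeff (R := k) (e + single 1 3) f else 0 with hB
  set B'' : MvPowerSeries (Fin (r+2)) k :=
    fun e => if (∀ i : Fin r, e i.succ.succ = 0) ∧ e 0 = 0 then coeff (R := k) (e + single 1 4) f else 0 with hB2
  set q : MvPowerSeries (Fin (r+2)) k :=
    fun e => if (∀ i : Fin r, e i.succ.succ = 0) then coeff (R := k) (e + (single 0 1 + single 1 1)) f else 0 with hq
  set h : Fin r → MvPowerSeries (Fin (r+2)) k :=
    fun i e => if (∀ j : Fin r, j < i → e j.succ.succ = 0) then coeff (R := k) (e + single i.succ.succ 1) f else 0 with hh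
  have cA : ∀ e, coeff (R := k) e A' = if (∀ i : Fin r, e i.succ.succ = 0) ∧ e 1 = 0 then coeff (R := k) (e + single 0 (n+1)) f else 0 := fun e => rfl
  have cB : ∀ e, coeff (R := k) e B' = if (∀ i : Fin r, e i.succ.succ = 0) ∧ e 0 = 0 then coeff (R := k) (e + single 1 3) f else 0 := fun e => rfl
  have cB2 : ∀ e, coeff (R := k) e B'' = if (∀ i : Fin r, e i.succ.succ = 0) ∧ e 0 = 0 then coeff (R := k) (e + single 1 4) f else 0 := fun e => rfl
  have cq : ∀ e, coeff (R := k) e q = if (∀ i : Fin r, e i.succ.succ = 0) then coeff (R := k) (e + (single 0 1 + single 1 1)) f else 0 := fun e => rfl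
  have ch : ∀ i e, coeff (R := k) e (h i) = if (∀ j : Fin r, j < i → e j.succ.succ = 0) then coeff (R := k) (e + single i.succ.succ 1) f else 0 := fun i e => rfl
  set L : MvPowerSeries (Fin (r+2)) k :=
    (∑ a ∈ Finset.range (n+1), coeff (R := k) (single 0 a) f • (X 0 : MvPowerSeries (Fin (r+2)) k) ^ a)
        + coeff (R := k) (single 1 1) f • X 1 ^ 1 + coeff (R := k) (single 1 2) f • X 1 ^ 2 with hL
  have Eq1 : f = L + X 0 ^ (n+1) * A' + X 1 ^ 3 * B' + (X 0 * X 1) * q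
      + ∑ i : Fin r, X i.succ.succ * h i := by
    apply MvPowerSeries.ext
    intro e
    have t1 : coeff (R := k) e (X 0 ^ (n+1) * A')
        = if single (0 : Fin (r+2)) (n+1) ≤ e then coeff (R := k) (e - single 0 (n+1)) A' else 0 := by
      rw [X_pow_eq, coeff_monomial_mul]; simp only [one_mul]
    have t2 : coeff (R := k) e (X 1 ^ 3 * B')
        = if single (1 : Fin (r+2)) 3 ≤ e then coeff (R := k) (e - single 1 3) B' else 0 := by
      rw [X_pow_eq, coeff_monomial_mul]; simp only [one_mul]
    have hxy : (X 0 : MvPowerSeries (Fin (r+2)) k) * X 1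
        = monomial (R := k) (single 0 1 + single 1 1) 1 := by
      rw [X_def, X_def, monomial_mul_monomial, one_mul]
    have t3 : coeff (R := k) e ((X 0 * X 1) * q)
        = if single (0 : Fin (r+2)) 1 + single 1 1 ≤ e
          then coeff (R := k) (e - (single 0 1 + single 1 1)) q else 0 := by
      rw [hxy, coeff_monomial_mul]; simp only [one_mul]
    have t4 : ∀ i : Fin r, coeff (R := k) e (X i.succ.succ * h i)
        = if single i.succ.succ 1 ≤ e then coeff (R := k) (e - single i.succ.succ 1) (h i) else 0 := by
      intro i; rw [X_def, coeff_monomial_mul]; simp only [one_mul]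
    simp only [hL, map_add, map_sum, map_smul, smul_eq_mul, coeff_X_pow, t1, t2, t3, t4]
    by_cases hP : ∀ i : Fin r, e i.succ.succ = 0
    · have hsum : (∑ i : Fin r, if single i.succ.succ 1 ≤ e
          then coeff (R := k) (e - single i.succ.succ 1) (h i) else 0) = 0 := by
        refine Finset.sum_eq_zero fun i _ => ?_
        have : ¬ single i.succ.succ 1 ≤ e := by rw [single_le_iff, hP i]; omega
        rw [if_neg this]
      rw [hsum]
      by_cases h1 : e 1 = 0
      · have he := eq_single0 e hP h1
        have hy1 : ¬ (e = single (1 : Fin (r+2)) 1) := by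
          intro hc; rw [hc, single_apply, if_pos rfl] at h1; omega
        have hy2 : ¬ (e = single (1 : Fin (r+2)) 2) := by
          intro hc; rw [hc, single_apply, if_pos rfl] at h1; omega
        have hy3 : ¬ single (1 : Fin (r+2)) 3 ≤ e := by rw [single_le_iff, h1]; omega
        have hqc : ¬ (single (0 : Fin (r+2)) 1 + single 1 1 ≤ e) := by
          rw [add_single_le zero_ne_one', h1]; omega
        rw [if_neg hy1, if_neg hy2, if_neg hy3, if_neg hqc]
        by_cases hxle : e 0 ≤ n
        · have hA1 : ¬ single (0 : Fin (r+2)) (n+1) ≤ e := by rw [single_le_iff]; omega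
          rw [if_neg hA1]
          have hiff : ∀ a : ℕ, (e = single (0 : Fin (r+2)) a) ↔ e 0 = a := by
            intro a
            constructor
            · intro hc; rw [hc, single_apply, if_pos rfl]
            · intro hc; rw [he, hc]
          simp only [hiff]
          rw [Finset.sum_eq_single (e 0)]
          · rw [if_pos rfl, mul_one]
            conv_lhs => rw [he]
            ring
          · intro b _ hb
            rw [if_neg (Ne.symm hb), mul_zero]
          · intro hc
            exfalso; exact hc (Finset.mem_range.mpr (by omega))
        · have hA1 : single (0 : Fin (r+2)) (n+1) ≤ e := by rw [single_le_iff]; omega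
          rw [if_pos hA1, cA]
          have hP' : ∀ i : Fin r, (e - single (0 : Fin (r+2)) (n+1)) i.succ.succ = 0 := by
            intro i; rw [sub_single_apply _ _ _ _ (ss_ne_zero i).symm]; exact hP i
          have h1' : (e - single (0 : Fin (r+2)) (n+1)) 1 = 0 := by
            rw [sub_single_apply _ _ _ _ zero_ne_one']; exact h1
          rw [if_pos ⟨hP', h1'⟩, tsub_add_cancel_of_le hA1]
          have hzero : ∀ a ∈ Finset.range (n+1),
              coeff (R := k) (single (0 : Fin (r+2)) a) f * (if e = single (0 : Fin (r+2)) a then 1 else 0) = 0 := by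
            intro a ha
            have : ¬ (e = single (0 : Fin (r+2)) a) := by
              intro hc
              rw [hc, single_apply, if_pos rfl] at hxle
              exact hxle (Nat.lt_succ_iff.mp (Finset.mem_range.mp ha))
            rw [if_neg this, mul_zero]
          rw [Finset.sum_congr rfl hzero]
          simp
      · by_cases h0 : e 0 = 0
        · have he := eq_single1 e hP h0
          have hxne : ∀ a : ℕ, ¬ (e = single (0 : Fin (r+2)) a) := by
            intro a hc
            apply h1
            rw [hc, single_apply, if_neg zero_ne_one']
          have hA1 : ¬ single (0 : Fin (r+2)) (n+1) ≤ e := by rw [single_le_iff, h0]; omega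
          have hqc : ¬ (single (0 : Fin (r+2)) 1 + single 1 1 ≤ e) := by
            rw [add_single_le zero_ne_one', h0]; omega
          have hzero : ∀ a ∈ Finset.range (n+1),
              coeff (R := k) (single (0 : Fin (r+2)) a) f * (if e = single (0 : Fin (r+2)) a then 1 else 0) = 0 := by
            intro a _; rw [if_neg (hxne a), mul_zero]
          rw [Finset.sum_congr rfl hzero, if_neg hA1, if_neg hqc, Finset.sum_const_zero]
          rcases (show e 1 = 1 ∨ e 1 = 2 ∨ 3 ≤ e 1 by omega) with h11 | h12 | h13
          · have hy1 : e = single (1 : Fin (r+2)) 1 := by rw [he, h11]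
            have hy2 : ¬ (e = single (1 : Fin (r+2)) 2) := by
              intro hc; rw [hc, single_apply, if_pos rfl] at h11; omega
            have hy3 : ¬ single (1 : Fin (r+2)) 3 ≤ e := by rw [single_le_iff]; omega
            rw [if_pos hy1, if_neg hy2, if_neg hy3]
            conv_lhs => rw [he, h11]
            ring
          · have hy1 : ¬ (e = single (1 : Fin (r+2)) 1) := by
              intro hc; rw [hc, single_apply, if_pos rfl] at h12; omega
            have hy2 : e = single (1 : Fin (r+2)) 2 := by rw [he, h12]
            have hy3 : ¬ single (1 : Fin (r+2)) 3 ≤ e := by rw [single_le_iff]; omega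
            rw [if_neg hy1, if_pos hy2, if_neg hy3]
            conv_lhs => rw [he, h12]
            ring
          · have hy1 : ¬ (e = single (1 : Fin (r+2)) 1) := by
              intro hc; rw [hc, single_apply, if_pos rfl] at h13; omega
            have hy2 : ¬ (e = single (1 : Fin (r+2)) 2) := by
              intro hc; rw [hc, single_apply, if_pos rfl] at h13; omega
            have hy3 : single (1 : Fin (r+2)) 3 ≤ e := by rw [single_le_iff]; omega
            rw [if_neg hy1, if_neg hy2, if_pos hy3, cB]
            have hP' : ∀ i : Fin r, (e - single (1 : Fin (r+2)) (3:ℕ)) i.succ.succ = 0 := by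
              intro i; rw [sub_single_apply _ _ _ _ (ss_ne_one i).symm]; exact hP i
            have h0' : (e - single (1 : Fin (r+2)) (3:ℕ)) 0 = 0 := by
              rw [sub_single_apply _ _ _ _ (Ne.symm zero_ne_one')]; exact h0
            rw [if_pos ⟨hP', h0'⟩, tsub_add_cancel_of_le hy3]
            ring
        · -- e 0 ≥ 1 and e 1 ≥ 1 : mixed monomial, covered by q
          have hqc : single (0 : Fin (r+2)) 1 + single 1 1 ≤ e := by
            rw [add_single_le zero_ne_one']; omega
          rw [if_pos hqc, cq]
          have hP' : ∀ i : Fin r, (e - (single (0 : Fin (r+2)) (1:ℕ) + single (1 : Fin (r+2)) (1:ℕ))) i.succ.succ = 0 := by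
            intro i
            rw [tsub_add_eq_tsub_tsub, sub_single_apply _ _ _ _ (ss_ne_one i).symm,
              sub_single_apply _ _ _ _ (ss_ne_zero i).symm]
            exact hP i
          rw [if_pos hP', tsub_add_cancel_of_le hqc]
          have hxne : ∀ a : ℕ, ¬ (e = single (0 : Fin (r+2)) a) := by
            intro a hc
            apply h1
            rw [hc, single_apply, if_neg zero_ne_one']
          have hy1 : ¬ (e = single (1 : Fin (r+2)) 1) := by
            intro hc; apply h0; rw [hc, single_apply, if_neg (Ne.symm zero_ne_one')]
          have hy2 : ¬ (e = single (1 : Fin (r+2)) 2) := by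
            intro hc; apply h0; rw [hc, single_apply, if_neg (Ne.symm zero_ne_one')]
          have hzero : ∀ a ∈ Finset.range (n+1),
              coeff (R := k) (single (0 : Fin (r+2)) a) f * (if e = single (0 : Fin (r+2)) a then 1 else 0) = 0 := by
            intro a _; rw [if_neg (hxne a), mul_zero]
          rw [Finset.sum_congr rfl hzero, if_neg hy1, if_neg hy2]
          have hA0 : coeff (R := k) (e - single (0 : Fin (r+2)) (n+1)) A' = 0 := by
            rw [cA, if_neg]
            rintro ⟨-, hc⟩
            rw [sub_single_apply _ _ _ _ zero_ne_one'] at hc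
            exact h1 hc
          have hB0 : coeff (R := k) (e - single (1 : Fin (r+2)) 3) B' = 0 := by
            rw [cB, if_neg]
            rintro ⟨-, hc⟩
            rw [sub_single_apply _ _ _ _ (Ne.symm zero_ne_one')] at hc
            exact h0 hc
          rw [hA0, hB0]
          simp
    · -- some z-variable occurs in e
      have hno : ∀ (m : ℕ), ¬ (e = single (0 : Fin (r+2)) m) := by
        intro m hc
        apply hP
        intro i
        rw [hc, single_apply, if_neg (ss_ne_zero i).symm]
      have hno1 : ∀ (m : ℕ), ¬ (e = single (1 : Fin (r+2)) m) := by
        intro m hc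
        apply hP
        intro i
        rw [hc, single_apply, if_neg (ss_ne_one i).symm]
      have hzero : ∀ a ∈ Finset.range (n+1),
          coeff (R := k) (single (0 : Fin (r+2)) a) f * (if e = single (0 : Fin (r+2)) a then 1 else 0) = 0 := by
        intro a _; rw [if_neg (hno a), mul_zero]
      have hA0 : coeff (R := k) (e - single (0 : Fin (r+2)) (n+1)) A' = 0 := by
        rw [cA, if_neg]
        rintro ⟨hc, -⟩
        apply hP
        intro i
        have := hc i
        rwa [sub_single_apply _ _ _ _ (ss_ne_zero i).symm] at this
      have hB0 : coeff (R := k) (e - single (1 : Fin (r+2)) 3) B' = 0 := by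
        rw [cB, if_neg]
        rintro ⟨hc, -⟩
        apply hP
        intro i
        have := hc i
        rwa [sub_single_apply _ _ _ _ (ss_ne_one i).symm] at this
      have hq0 : coeff (R := k) (e - (single (0 : Fin (r+2)) 1 + single 1 1)) q = 0 := by
        rw [cq, if_neg]
        intro hc
        apply hP
        intro i
        have := hc i
        rwa [tsub_add_eq_tsub_tsub, sub_single_apply _ _ _ _ (ss_ne_one i).symm,
          sub_single_apply _ _ _ _ (ss_ne_zero i).symm] at this
      rw [Finset.sum_congr rfl hzero, if_neg (hno1 1), if_neg (hno1 2), hA0, hB0, hq0]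
      -- the variable sum picks out the minimal z-index
      push_neg at hP
      obtain ⟨iw, hiw⟩ := hP
      set T : Finset (Fin r) := Finset.univ.filter (fun i : Fin r => e i.succ.succ ≠ 0) with hT
      have hTne : T.Nonempty := ⟨iw, by simp [hT, hiw]⟩
      set i0 := T.min' hTne with hi0def
      have hi0 : e i0.succ.succ ≠ 0 := by
        have := T.min'_mem hTne
        simp only [hT, Finset.mem_filter] at this
        exact this.2
      have hmin : ∀ j : Fin r, j < i0 → e j.succ.succ = 0 := by
        intro j hj
        by_contra hc
        exact absurd (T.min'_le j (by simp [hT, hc])) (not_le.mpr hj)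
      have hss : ∀ i j : Fin r, i ≠ j → (i.succ.succ : Fin (r+2)) ≠ j.succ.succ := by
        intro i j hij hc
        exact hij (Fin.succ_injective _ (Fin.succ_injective _ hc))
      rw [Finset.sum_eq_single i0]
      · have hle : single (i0.succ.succ : Fin (r+2)) 1 ≤ e := by rw [single_le_iff]; omega
        rw [if_pos hle, ch]
        have hcond : ∀ j : Fin r, j < i0 → (e - single (i0.succ.succ : Fin (r+2)) (1:ℕ)) j.succ.succ = 0 := by
          intro j hj
          rw [sub_single_apply _ _ _ _ (hss i0 j (ne_of_gt hj))]
          exact hmin j hj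
        rw [if_pos hcond, tsub_add_cancel_of_le hle]
        simp
      · intro b _ hb
        by_cases hbe : e b.succ.succ = 0
        · have : ¬ single (b.succ.succ : Fin (r+2)) 1 ≤ e := by rw [single_le_iff]; omega
          rw [if_neg this]
        · have hi0b : i0 < b := lt_of_le_of_ne (T.min'_le b (by simp [hT, hbe])) (Ne.symm hb)
          have hinner : coeff (R := k) (e - single (b.succ.succ : Fin (r+2)) 1) (h b) = 0 := by
            rw [ch, if_neg]
            intro hc
            have := hc i0 hi0b
            rw [sub_single_apply _ _ _ _ (hss b i0 (ne_of_gt hi0b))] at this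
            exact hi0 this
          rw [hinner, ite_self]
      · intro hc
        exact absurd (Finset.mem_univ i0) hc
  have Eq2 : X 0 ^ n * B' = coeff (R := k) (single 1 3) f • X 0 ^ n + (X 0 ^ n * X 1) * B'' := by
    have hmono : (X 0 : MvPowerSeries (Fin (r+2)) k) ^ n * X 1
        = monomial (R := k) (single 0 n + single 1 1) 1 := by
      rw [X_pow_eq, X_def, monomial_mul_monomial, one_mul]
    apply MvPowerSeries.ext
    intro e
    rw [hmono, X_pow_eq, map_add, map_smul, smul_eq_mul, coeff_monomial_mul, coeff_monomial_mul,
      coeff_monomial]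
    simp only [one_mul, mul_one]
    by_cases hle : single (0 : Fin (r+2)) n ≤ e
    · have hen : n ≤ e 0 := single_le_iff.mp hle
      by_cases hc : (∀ i : Fin r, e i.succ.succ = 0) ∧ e 0 = n
      · obtain ⟨hP, h0n⟩ := hc
        rw [if_pos hle, cB]
        have hP' : ∀ i : Fin r, (e - single (0 : Fin (r+2)) (n:ℕ)) i.succ.succ = 0 := by
          intro i; rw [sub_single_apply _ _ _ _ (ss_ne_zero i).symm]; exact hP i
        have h00 : (e - single (0 : Fin (r+2)) (n:ℕ)) 0 = 0 := by
          rw [Finsupp.tsub_apply, single_apply, if_pos rfl]; omega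
        rw [if_pos ⟨hP', h00⟩]
        by_cases h1 : e 1 = 0
        · have he : e = single (0 : Fin (r+2)) n := by
            conv_lhs => rw [eq_single0 e hP h1, h0n]
          have hc2 : ¬ (single (0 : Fin (r+2)) n + single 1 1 ≤ e) := by
            rw [add_single_le zero_ne_one']; omega
          rw [if_pos he, if_neg hc2, add_zero, he, tsub_self, zero_add, mul_one]
        · have hne : e ≠ single (0 : Fin (r+2)) n := by
            intro hc2; rw [hc2, single_apply, if_neg zero_ne_one'] at h1; exact h1 rfl
          have hc2 : single (0 : Fin (r+2)) n + single 1 1 ≤ e := by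
            rw [add_single_le zero_ne_one']; omega
          rw [if_neg hne, mul_zero, zero_add, if_pos hc2, cB2]
          have hP'' : ∀ i : Fin r,
              (e - (single (0 : Fin (r+2)) (n:ℕ) + single (1 : Fin (r+2)) (1:ℕ))) i.succ.succ = 0 := by
            intro i
            rw [tsub_add_eq_tsub_tsub, sub_single_apply _ _ _ _ (ss_ne_one i).symm,
              sub_single_apply _ _ _ _ (ss_ne_zero i).symm]
            exact hP i
          have h00' : (e - (single (0 : Fin (r+2)) (n:ℕ) + single (1 : Fin (r+2)) (1:ℕ))) 0 = 0 := by
            rw [tsub_add_eq_tsub_tsub, sub_single_apply _ _ _ _ (Ne.symm zero_ne_one'),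
              Finsupp.tsub_apply, single_apply, if_pos rfl]
            omega
          rw [if_pos ⟨hP'', h00'⟩]
          have harg : e - (single (0 : Fin (r+2)) (n:ℕ)) + single 1 3
              = e - (single (0 : Fin (r+2)) (n:ℕ) + single (1 : Fin (r+2)) (1:ℕ)) + single 1 4 := by
            rw [tsub_add_eq_tsub_tsub]
            ext j
            rcases fin_cases' j with hj | hj | ⟨i, hj⟩ <;> subst hj
            · simp [Finsupp.add_apply, Finsupp.tsub_apply, single_apply, zero_ne_one']
            · simp only [Finsupp.add_apply, Finsupp.tsub_apply, single_apply,
                if_neg zero_ne_one', if_pos rfl, if_true, eq_self_iff_true]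
              omega
            · simp [Finsupp.add_apply, Finsupp.tsub_apply, single_apply,
                (ss_ne_zero i).symm, (ss_ne_one i).symm]
          rw [harg]
      · have hL0 : coeff (R := k) (e - single (0 : Fin (r+2)) n) B' = 0 := by
          rw [cB, if_neg]
          rintro ⟨hP', h0'⟩
          apply hc
          constructor
          · intro i
            have := hP' i
            rwa [sub_single_apply _ _ _ _ (ss_ne_zero i).symm] at this
          · rw [Finsupp.tsub_apply, single_apply, if_pos rfl] at h0'
            omega
        have hne : e ≠ single (0 : Fin (r+2)) n := by
          intro hc2
          apply hc
          constructor
          · intro i; rw [hc2, single_apply, if_neg (ss_ne_zero i).symm]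
          · rw [hc2, single_apply, if_pos rfl]
        have hB20 : coeff (R := k) (e - (single (0 : Fin (r+2)) n + single 1 1)) B'' = 0 := by
          rw [cB2, if_neg]
          rintro ⟨hP', h0'⟩
          apply hc
          constructor
          · intro i
            have := hP' i
            rwa [tsub_add_eq_tsub_tsub, sub_single_apply _ _ _ _ (ss_ne_one i).symm,
              sub_single_apply _ _ _ _ (ss_ne_zero i).symm] at this
          · rw [tsub_add_eq_tsub_tsub, sub_single_apply _ _ _ _ (Ne.symm zero_ne_one'),
              Finsupp.tsub_apply, single_apply, if_pos rfl] at h0'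
            omega
        rw [if_pos hle, hL0, if_neg hne, mul_zero, zero_add, hB20, ite_self]
    · have hne : e ≠ single (0 : Fin (r+2)) n := by
        intro hc2; exact hle (hc2 ▸ le_rfl)
      have hc2 : ¬ (single (0 : Fin (r+2)) n + single 1 1 ≤ e) := by
        intro hcc
        exact hle (le_trans (self_le_add_right _ _) hcc)
      rw [if_neg hle, if_neg hne, mul_zero, zero_add, if_neg hc2]
  have key : f - (L - coeff (R := k) (single 1 3) f • X 0 ^ n)
      = X 0 ^ (n+1) * A' + (X 1 ^ 3 + X 0 ^ n) * B' - (X 0 ^ n * X 1) * B''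
        + (X 0 * X 1) * q + ∑ i : Fin r, X i.succ.succ * h i := by
    rw [add_mul, Eq2]
    nth_rewrite 1 [Eq1]
    abel
  have h1 : (X 1 : MvPowerSeries (Fin (r+2)) k) ^ 3 + X 0 ^ n ∈ S := by
    apply Ideal.subset_span; left; simp
  have h2 : (X 0 : MvPowerSeries (Fin (r+2)) k) * X 1 ∈ S := by
    apply Ideal.subset_span; left; simp
  have h3 : ∀ i : Fin r, (X i.succ.succ : MvPowerSeries (Fin (r+2)) k) ∈ S := by
    intro i; apply Ideal.subset_span; right; exact ⟨i, rfl⟩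
  have hx1 : (X 0 : MvPowerSeries (Fin (r+2)) k) ^ (n+1) ∈ S := by
    have : (X 0 : MvPowerSeries (Fin (r+2)) k) ^ (n+1)
        = X 0 * (X 1 ^ 3 + X 0 ^ n) - X 1 ^ 2 * (X 0 * X 1) := by ring
    rw [this]
    exact sub_mem (Ideal.mul_mem_left _ _ h1) (Ideal.mul_mem_left _ _ h2)
  have hx2 : (X 0 : MvPowerSeries (Fin (r+2)) k) ^ n * X 1 ∈ S := by
    have : (X 0 : MvPowerSeries (Fin (r+2)) k) ^ n * X 1 = (X 0 * X 1) * X 0 ^ (n-1) := by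
      conv_lhs => rw [show n = (n-1)+1 from by omega]
      ring
    rw [this]
    exact Ideal.mul_mem_right _ _ h2
  rw [show (∑ a ∈ Finset.range (n+1), coeff (R := k) (single 0 a) f • (X 0 : MvPowerSeries (Fin (r+2)) k) ^ a)
        + coeff (R := k) (single 1 1) f • X 1 ^ 1 + coeff (R := k) (single 1 2) f • X 1 ^ 2
        - coeff (R := k) (single 1 3) f • X 0 ^ n = L - coeff (R := k) (single 1 3) f • X 0 ^ n from rfl, key]
  exact add_mem (add_mem (sub_mem (add_mem (Ideal.mul_mem_right _ _ hx1) (Ideal.mul_mem_right _ _ h1))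
      (Ideal.mul_mem_right _ _ hx2)) (Ideal.mul_mem_right _ _ h2))
    (Submodule.sum_mem _ fun i _ => Ideal.mul_mem_right _ _ (h3 i))


noncomputable def Phi (k : Type) [Field k] (r n : ℕ) :
    MvPowerSeries (Fin (r+2)) k →ₗ[k] (Fin (n+3) → k) :=
  LinearMap.pi fun i =>
    if (i : ℕ) ≤ n then coeff (R := k) (single 0 (i:ℕ)) - (if (i:ℕ) = n then coeff (R := k) (single 1 3) else 0)
    else if (i : ℕ) = n+1 then coeff (R := k) (single 1 1) else coeff (R := k) (single 1 2)

lemma Phi_apply (n : ℕ) (f : MvPowerSeries (Fin (r+2)) k) (i : Fin (n+3)) :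
    Phi k r n f i = if (i : ℕ) ≤ n then
        coeff (R := k) (single 0 (i:ℕ)) f - (if (i:ℕ) = n then coeff (R := k) (single 1 3) f else 0)
      else if (i : ℕ) = n+1 then coeff (R := k) (single 1 1) f else coeff (R := k) (single 1 2) f := by
  rw [Phi, LinearMap.pi_apply]
  rcases le_or_gt (i : ℕ) n with h | h
  · rw [if_pos h, if_pos h, LinearMap.sub_apply]
    by_cases h2 : (i : ℕ) = n
    · rw [if_pos h2, if_pos h2]
    · rw [if_neg h2, if_neg h2, LinearMap.zero_apply]
  · rw [if_neg (not_le.mpr h), if_neg (not_le.mpr h)]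
    by_cases h2 : (i : ℕ) = n + 1
    · rw [if_pos h2, if_pos h2]
    · rw [if_neg h2, if_neg h2]

lemma coeff_mul_Xpow (g : MvPowerSeries (Fin (r+2)) k) (s : Fin (r+2)) (m : ℕ)
    (e : Fin (r+2) →₀ ℕ) :
    coeff (R := k) e (g * X s ^ m) = if single s m ≤ e then coeff (R := k) (e - single s m) g else 0 := by
  rw [X_pow_eq, coeff_mul_monomial]
  simp only [mul_one]

lemma Phi_J (n : ℕ) (hn : 4 ≤ n) (f : MvPowerSeries (Fin (r+2)) k)
    (hf : f ∈ Ideal.span ({(X 1 : MvPowerSeries (Fin (r+2)) k) ^ 3 + X 0 ^ n, X 0 * X 1}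
      ∪ Set.range (fun i : Fin r => (X i.succ.succ : MvPowerSeries (Fin (r+2)) k)))) :
    Phi k r n f = 0 := by
  classical
  have key : ∀ (v : MvPowerSeries (Fin (r+2)) k), v ∈ Ideal.span ({(X 1 : MvPowerSeries (Fin (r+2)) k) ^ 3 + X 0 ^ n, X 0 * X 1}
      ∪ Set.range (fun i : Fin r => (X i.succ.succ : MvPowerSeries (Fin (r+2)) k))) →
      ∀ g : MvPowerSeries (Fin (r+2)) k, Phi k r n (g * v) = 0 := by
    intro v hv
    induction hv using Submodule.span_induction with
    | mem w hw =>
      intro g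
      funext i
      rw [Phi_apply, Pi.zero_apply]
      simp only [Set.mem_union, Set.mem_insert_iff, Set.mem_singleton_iff, Set.mem_range] at hw
      rcases hw with (hw | hw) | ⟨iz, rfl⟩
      · -- w = X1^3 + X0^n
        subst hw
        have e1 : ∀ d : Fin (r+2) →₀ ℕ, coeff (R := k) d (g * (X 1 ^ 3 + X 0 ^ n))
            = (if single (1 : Fin (r+2)) 3 ≤ d then coeff (R := k) (d - single 1 3) g else 0)
              + (if single (0 : Fin (r+2)) n ≤ d then coeff (R := k) (d - single 0 n) g else 0) := by
          intro d; rw [mul_add, map_add, coeff_mul_Xpow, coeff_mul_Xpow]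
        simp only [e1]
        have c1 : ∀ a : ℕ, ¬ (single (1 : Fin (r+2)) 3 ≤ single (0 : Fin (r+2)) a) := by
          intro a
          rw [single_le_iff, single_apply, if_neg zero_ne_one']
          omega
        have c2 : ∀ a : ℕ, ¬ (single (0 : Fin (r+2)) n ≤ single (1 : Fin (r+2)) a) := by
          intro a
          rw [single_le_iff, single_apply, if_neg (Ne.symm zero_ne_one')]
          omega
        have c3 : ∀ a b : ℕ, (single (1 : Fin (r+2)) a ≤ single (1 : Fin (r+2)) b) ↔ a ≤ b := by
          intro a b; rw [single_le_iff, single_apply, if_pos rfl]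
        have c4 : ∀ a b : ℕ, (single (0 : Fin (r+2)) a ≤ single (0 : Fin (r+2)) b) ↔ a ≤ b := by
          intro a b; rw [single_le_iff, single_apply, if_pos rfl]
        rcases le_or_gt (i : ℕ) n with h | h
        · rw [if_pos h]
          rw [if_neg (c1 (i : ℕ))]
          by_cases h2 : (i : ℕ) = n
          · rw [if_pos h2, if_pos ((c4 n (i:ℕ)).mpr (by omega)), if_pos ((c3 3 3).mpr le_rfl),
              if_neg (c2 3), h2, tsub_self, tsub_self, add_zero]
            ring
          · rw [if_neg h2, if_neg (show ¬ (single (0:Fin (r+2)) n ≤ single (0:Fin (r+2)) (i:ℕ)) by rw [c4]; omega)]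
            ring
        · rw [if_neg (not_le.mpr h)]
          by_cases h2 : (i : ℕ) = n + 1
          · rw [if_pos h2, if_neg (show ¬ (single (1:Fin (r+2)) 3 ≤ single (1:Fin (r+2)) 1) by rw [c3]; omega),
              if_neg (c2 1)]
            ring
          · rw [if_neg h2, if_neg (show ¬ (single (1:Fin (r+2)) 3 ≤ single (1:Fin (r+2)) 2) by rw [c3]; omega),
              if_neg (c2 2)]
            ring
      · -- w = X 0 * X 1
        subst hw
        have hxy : (X 0 : MvPowerSeries (Fin (r+2)) k) * X 1
            = monomial (R := k) (single 0 1 + single 1 1) 1 := by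
          rw [X_def, X_def, monomial_mul_monomial, one_mul]
        have e1 : ∀ d : Fin (r+2) →₀ ℕ, coeff (R := k) d (g * (X 0 * X 1))
            = if single (0 : Fin (r+2)) 1 + single 1 1 ≤ d
              then coeff (R := k) (d - (single 0 1 + single 1 1)) g else 0 := by
          intro d; rw [hxy, coeff_mul_monomial]; simp only [mul_one]
        simp only [e1]
        have c1 : ∀ a : ℕ, ¬ (single (0 : Fin (r+2)) 1 + single 1 1 ≤ single (0 : Fin (r+2)) a) := by
          intro a
          rw [add_single_le zero_ne_one']
          simp [single_apply, zero_ne_one', Ne.symm zero_ne_one']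
        have c2 : ∀ a : ℕ, ¬ (single (0 : Fin (r+2)) 1 + single 1 1 ≤ single (1 : Fin (r+2)) a) := by
          intro a
          rw [add_single_le zero_ne_one']
          simp [single_apply, zero_ne_one', Ne.symm zero_ne_one']
        rcases le_or_gt (i : ℕ) n with h | h
        · rw [if_pos h, if_neg (c1 (i:ℕ))]
          by_cases h2 : (i : ℕ) = n
          · rw [if_pos h2, if_neg (c2 3)]; ring
          · rw [if_neg h2]; ring
        · rw [if_neg (not_le.mpr h)]
          by_cases h2 : (i : ℕ) = n + 1
          · rw [if_pos h2, if_neg (c2 1)]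
          · rw [if_neg h2, if_neg (c2 2)]
      · -- w = X iz.succ.succ
        have e1 : ∀ d : Fin (r+2) →₀ ℕ, coeff (R := k) d (g * X iz.succ.succ)
            = if single (iz.succ.succ : Fin (r+2)) 1 ≤ d
              then coeff (R := k) (d - single iz.succ.succ 1) g else 0 := by
          intro d
          have : (X iz.succ.succ : MvPowerSeries (Fin (r+2)) k) = X iz.succ.succ ^ 1 := by
            rw [pow_one]
          rw [this, coeff_mul_Xpow]
        simp only [e1]
        have c1 : ∀ a : ℕ, ¬ (single (iz.succ.succ : Fin (r+2)) 1 ≤ single (0 : Fin (r+2)) a) := by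
          intro a
          rw [single_le_iff, single_apply, if_neg (ss_ne_zero iz).symm]
          omega
        have c2 : ∀ a : ℕ, ¬ (single (iz.succ.succ : Fin (r+2)) 1 ≤ single (1 : Fin (r+2)) a) := by
          intro a
          rw [single_le_iff, single_apply, if_neg (ss_ne_one iz).symm]
          omega
        rcases le_or_gt (i : ℕ) n with h | h
        · rw [if_pos h, if_neg (c1 (i:ℕ))]
          by_cases h2 : (i : ℕ) = n
          · rw [if_pos h2, if_neg (c2 3)]; ring
          · rw [if_neg h2]; ring
        · rw [if_neg (not_le.mpr h)]
          by_cases h2 : (i : ℕ) = n + 1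
          · rw [if_pos h2, if_neg (c2 1)]
          · rw [if_neg h2, if_neg (c2 2)]
    | zero => intro g; rw [mul_zero, map_zero]
    | add u w _ _ hu hw => intro g; rw [mul_add, map_add, hu, hw, add_zero]
    | smul a u _ hu => intro g; rw [smul_eq_mul, ← mul_assoc]; exact hu (g * a)
  have := key f hf 1
  rwa [one_mul] at this

lemma Phi_basis (n : ℕ) (hn : 4 ≤ n) (i j : Fin (n+3)) :
    Phi k r n (if (j : ℕ) ≤ n then (X 0 : MvPowerSeries (Fin (r+2)) k) ^ (j:ℕ)
      else if (j:ℕ) = n+1 then X 1 else X 1 ^ 2) i = if i = j then 1 else 0 := by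
  classical
  have hi3 : (i : ℕ) < n + 3 := i.isLt
  have hj3 : (j : ℕ) < n + 3 := j.isLt
  have key : ∀ (s : Fin (r+2)) (a : ℕ) (d : Fin (r+2) →₀ ℕ),
      coeff (R := k) d ((X s : MvPowerSeries (Fin (r+2)) k) ^ a) = if d = single s a then 1 else 0 :=
    fun s a d => coeff_X_pow d s a
  have hss0 : ∀ a b : ℕ, (single (0 : Fin (r+2)) a = single (0 : Fin (r+2)) b) ↔ a = b :=
    fun a b => ⟨fun h => single_injective _ h, fun h => by rw [h]⟩
  have hss1 : ∀ a b : ℕ, (single (1 : Fin (r+2)) a = single (1 : Fin (r+2)) b) ↔ a = b :=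
    fun a b => ⟨fun h => single_injective _ h, fun h => by rw [h]⟩
  have hs01 : ∀ a b : ℕ, (single (0 : Fin (r+2)) a = single (1 : Fin (r+2)) b) ↔ (a = 0 ∧ b = 0) := by
    intro a b
    rw [single_eq_single_iff]
    constructor
    · rintro (⟨h, -⟩ | ⟨h1, h2⟩)
      · exact absurd h zero_ne_one'
      · exact ⟨h1, h2⟩
    · rintro ⟨h1, h2⟩; exact Or.inr ⟨h1, h2⟩
  have hs10 : ∀ a b : ℕ, (single (1 : Fin (r+2)) a = single (0 : Fin (r+2)) b) ↔ (a = 0 ∧ b = 0) := by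
    intro a b
    rw [eq_comm, hs01]
    tauto
  by_cases hj : (j : ℕ) ≤ n
  · rw [if_pos hj, Phi_apply]
    by_cases hi : (i : ℕ) ≤ n
    · rw [if_pos hi, key, key, if_neg (show ¬ (single (1:Fin (r+2)) 3 = single (0:Fin (r+2)) (j:ℕ))
        from fun hc => by rw [hs10] at hc; omega), ite_self, sub_zero]
      by_cases h : (i : ℕ) = (j : ℕ)
      · rw [if_pos (show (single (0:Fin (r+2)) (i:ℕ)) = single (0:Fin (r+2)) (j:ℕ) by rw [hss0]; exact h),
          if_pos (Fin.ext h)]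
      · rw [if_neg (fun hc => h ((hss0 _ _).mp hc)), if_neg (fun hc => h (congrArg _ hc))]
    · rw [if_neg hi, key, key,
        if_neg (show ¬ (single (1:Fin (r+2)) 1 = single (0:Fin (r+2)) (j:ℕ))
          from fun hc => by rw [hs10] at hc; omega),
        if_neg (show ¬ (single (1:Fin (r+2)) 2 = single (0:Fin (r+2)) (j:ℕ))
          from fun hc => by rw [hs10] at hc; omega),
        ite_self, if_neg (show ¬ i = j from fun hc => hi (by rw [hc]; exact hj))]
  · rw [if_neg hj, Phi_apply]
    by_cases hj2 : (j : ℕ) = n + 1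
    · rw [if_pos hj2, show (X 1 : MvPowerSeries (Fin (r+2)) k) = X 1 ^ 1 from (pow_one _).symm]
      by_cases hi : (i : ℕ) ≤ n
      · rw [if_pos hi, key, key,
          if_neg (show ¬ (single (0:Fin (r+2)) (i:ℕ) = single (1:Fin (r+2)) 1)
            from fun hc => by rw [hs01] at hc; omega),
          if_neg (show ¬ (single (1:Fin (r+2)) 3 = single (1:Fin (r+2)) 1)
            from fun hc => by rw [hss1] at hc; omega),
          ite_self, sub_zero, if_neg (show ¬ i = j from fun hc => by rw [hc] at hi; omega)]
      · by_cases hi2 : (i : ℕ) = n + 1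
        · rw [if_neg hi, if_pos hi2, key, if_pos (by rw [hss1]),
            if_pos (show i = j from Fin.ext (by omega))]
        · rw [if_neg hi, if_neg hi2, key,
            if_neg (show ¬ (single (1:Fin (r+2)) 2 = single (1:Fin (r+2)) 1)
              from fun hc => by rw [hss1] at hc; omega),
            if_neg (show ¬ i = j from fun hc => by rw [hc] at hi2; omega)]
    · rw [if_neg hj2]
      have hjv : (j : ℕ) = n + 2 := by omega
      by_cases hi : (i : ℕ) ≤ n
      · rw [if_pos hi, key, key,
          if_neg (show ¬ (single (0:Fin (r+2)) (i:ℕ) = single (1:Fin (r+2)) 2)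
            from fun hc => by rw [hs01] at hc; omega),
          if_neg (show ¬ (single (1:Fin (r+2)) 3 = single (1:Fin (r+2)) 2)
            from fun hc => by rw [hss1] at hc; omega),
          ite_self, sub_zero, if_neg (show ¬ i = j from fun hc => by rw [hc] at hi; omega)]
      · by_cases hi2 : (i : ℕ) = n + 1
        · rw [if_neg hi, if_pos hi2, key,
            if_neg (show ¬ (single (1:Fin (r+2)) 1 = single (1:Fin (r+2)) 2)
              from fun hc => by rw [hss1] at hc; omega),
            if_neg (show ¬ i = j from fun hc => by rw [hc] at hi2; omega)]
        · rw [if_neg hi, if_neg hi2, key, if_pos (by rw [hss1]),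
            if_pos (show i = j from Fin.ext (by omega))]

end Stmt12Aux

set_option maxHeartbeats 2000000 in
open Stmt12Aux Finsupp MvPowerSeries in
/-- The local model `R/J` of a `C_{3,n}` cuspidal structure is an
`(n+3)`-dimensional `k`-vector space with basis the classes of
`1, x, x², …, xⁿ, y, y²`; in particular its multiplicity is `n + 3`. -/
theorem stmt_12 (k : Type) [Field k] (n r : ℕ) (hn : 4 ≤ n)
    (x y : MvPowerSeries (Fin (r + 2)) k) (z : Fin r → MvPowerSeries (Fin (r + 2)) k)
    (hx : x = MvPowerSeries.X 0) (hy : y = MvPowerSeries.X 1)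
    (hz : ∀ i : Fin r, z i = MvPowerSeries.X i.succ.succ)
    (J : Ideal (MvPowerSeries (Fin (r + 2)) k))
    (hJ : J = Ideal.span ({y ^ 3 + x ^ n, x * y} ∪ Set.range z)) :
    FiniteDimensional k (MvPowerSeries (Fin (r + 2)) k ⧸ J) ∧
    Module.finrank k (MvPowerSeries (Fin (r + 2)) k ⧸ J) = n + 3 ∧
    ∃ b : Module.Basis (Fin (n + 3)) k (MvPowerSeries (Fin (r + 2)) k ⧸ J),
      ∀ i : Fin (n + 3),
        b i = if (i : ℕ) ≤ n then Ideal.Quotient.mk J (x ^ (i : ℕ))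
              else if (i : ℕ) = n + 1 then Ideal.Quotient.mk J y
              else Ideal.Quotient.mk J (y ^ 2) := by
  classical
  subst hx hy
  have hzeq : z = fun i : Fin r => MvPowerSeries.X i.succ.succ := funext hz
  subst hzeq
  set m : Fin (n+3) → MvPowerSeries (Fin (r+2)) k := fun i =>
    if (i : ℕ) ≤ n then (X 0 : MvPowerSeries (Fin (r+2)) k) ^ (i:ℕ)
    else if (i:ℕ) = n+1 then X 1 else X 1 ^ 2 with hm
  set v : Fin (n+3) → (MvPowerSeries (Fin (r+2)) k ⧸ J) :=
    fun i => Ideal.Quotient.mk J (m i) with hv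
  set π : MvPowerSeries (Fin (r+2)) k →ₗ[k] (MvPowerSeries (Fin (r+2)) k ⧸ J) :=
    (Ideal.Quotient.mkₐ k J).toLinearMap with hπdef
  have hπ : ∀ f : MvPowerSeries (Fin (r+2)) k, π f = Ideal.Quotient.mk J f := by
    intro f
    rw [hπdef, AlgHom.toLinearMap_apply, Ideal.Quotient.mkₐ_eq_mk]
  have hrange : ∀ i : Fin (n+3), v i ∈ Submodule.span k (Set.range v) :=
    fun i => Submodule.subset_span ⟨i, rfl⟩
  have hspan : ⊤ ≤ Submodule.span k (Set.range v) := by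
    rintro c -
    obtain ⟨f, rfl⟩ := Ideal.Quotient.mk_surjective c
    have hmem := master n hn f
    rw [← hJ] at hmem
    have heq : Ideal.Quotient.mk J f = Ideal.Quotient.mk J
        ((∑ a ∈ Finset.range (n+1), coeff (R := k) (single 0 a) f • (X 0 : MvPowerSeries (Fin (r+2)) k) ^ a)
          + coeff (R := k) (single 1 1) f • X 1 ^ 1 + coeff (R := k) (single 1 2) f • X 1 ^ 2
          - coeff (R := k) (single 1 3) f • X 0 ^ n) := by
      rw [Ideal.Quotient.eq]
      exact hmem
    rw [heq, ← hπ, map_sub, map_add, map_add, map_sum]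
    simp_rw [map_smul]
    have hx0 : ∀ a : ℕ, a ≤ n → π ((X 0 : MvPowerSeries (Fin (r+2)) k) ^ a)
        ∈ Submodule.span k (Set.range v) := by
      intro a ha
      have : π ((X 0 : MvPowerSeries (Fin (r+2)) k) ^ a) = v ⟨a, by omega⟩ := by
        rw [hπ, hv]
        congr 1
        simp only [hm]
        exact (if_pos ha).symm
      rw [this]
      exact hrange _
    have hy1 : π ((X 1 : MvPowerSeries (Fin (r+2)) k) ^ 1) ∈ Submodule.span k (Set.range v) := by
      have : π ((X 1 : MvPowerSeries (Fin (r+2)) k) ^ 1) = v ⟨n+1, by omega⟩ := by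
        rw [hπ, hv]
        congr 1
        simp only [hm]
        rw [pow_one, if_neg (show ¬ n + 1 ≤ n by omega)]
        simp
      rw [this]
      exact hrange _
    have hy2 : π ((X 1 : MvPowerSeries (Fin (r+2)) k) ^ 2) ∈ Submodule.span k (Set.range v) := by
      have : π ((X 1 : MvPowerSeries (Fin (r+2)) k) ^ 2) = v ⟨n+2, by omega⟩ := by
        rw [hπ, hv]
        congr 1
        simp only [hm]
        rw [if_neg (show ¬ n + 2 ≤ n by omega), if_neg (show ¬ n + 2 = n + 1 by omega)]
        
      rw [this]
      exact hrange _
    refine Submodule.sub_mem _ (Submodule.add_mem _ (Submodule.add_mem _ ?_ ?_) ?_) ?_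
    · refine Submodule.sum_mem _ fun a ha => Submodule.smul_mem _ _ ?_
      exact hx0 a (Nat.lt_succ_iff.mp (Finset.mem_range.mp ha))
    · exact Submodule.smul_mem _ _ hy1
    · exact Submodule.smul_mem _ _ hy2
    · exact Submodule.smul_mem _ _ (hx0 n le_rfl)
  have hli : LinearIndependent k v := by
    rw [Fintype.linearIndependent_iff]
    intro g hg j
    have hp : (∑ i, g i • m i) ∈ J := by
      rw [← Ideal.Quotient.eq_zero_iff_mem, ← hπ, map_sum]
      simp_rw [map_smul, hπ]
      exact hg
    rw [hJ] at hp
    have h0 := Phi_J n hn _ hp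
    have hcomp : Phi k r n (∑ i, g i • m i) j = g j := by
      rw [map_sum, Finset.sum_apply]
      have hterm : ∀ i : Fin (n+3), (Phi k r n (g i • m i)) j
          = if j = i then g i else 0 := by
        intro i
        rw [map_smul, Pi.smul_apply, smul_eq_mul, hm]
        rw [Phi_basis n hn j i, mul_ite, mul_one, mul_zero]
      simp_rw [hterm]
      rw [Finset.sum_ite_eq]
      simp
    rw [h0] at hcomp
    simpa using hcomp.symm
  let b : Module.Basis (Fin (n+3)) k (MvPowerSeries (Fin (r+2)) k ⧸ J) := Module.Basis.mk hli hspan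
  refine ⟨Module.Finite.of_basis b, ?_, ⟨b, ?_⟩⟩
  · rw [Module.finrank_eq_card_basis b, Fintype.card_fin]
  · intro i
    rw [Module.Basis.mk_apply, hv]
    simp only [hm]
    rw [apply_ite (Ideal.Quotient.mk J), apply_ite (Ideal.Quotient.mk J)]
end

section
/- J : I = (xⁿ, xy, y³, z₁, …, z_r); J : I² = (x^{n−1}, xy, y², z₁, …, z_r); for every ℓ with 3 ≤ ℓ ≤ n one has J : I^ℓ = (x^{n+1−ℓ}, y, z₁, …, z_r); and J : I^{n+1} = R. -/
open MvPowerSeries Finsupp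

section General
variable {k : Type} [Field k] {σ : Type*} [DecidableEq σ]

theorem aux_monomial_dvd_iff {m : σ →₀ ℕ} {f : MvPowerSeries σ k} :
    (monomial m (1:k)) ∣ f ↔ ∀ d, coeff d f ≠ 0 → m ≤ d := by
  constructor
  · rintro ⟨q, rfl⟩ d hd
    by_contra h
    rw [coeff_monomial_mul, if_neg h] at hd
    exact hd rfl
  · intro h
    refine ⟨fun e => coeff (e + m) f, ?_⟩
    symm
    ext d
    erw [coeff_monomial_mul]
    split_ifs with hle
    · rw [one_mul]
      show coeff ((d - m) + m) f = coeff d f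
      rw [tsub_add_cancel_of_le hle]
    · by_contra hd
      exact hle (h d (fun h0 => hd h0.symm))

theorem aux_mem_monSpan (L : List (σ →₀ ℕ)) (f : MvPowerSeries σ k) :
    f ∈ Ideal.span ((fun m => monomial m (1:k)) '' {a | a ∈ L}) ↔
      ∀ d, coeff d f ≠ 0 → ∃ m ∈ L, m ≤ d := by
  classical
  induction L generalizing f with
  | nil =>
      have hset : {m : σ →₀ ℕ | m ∈ ([] : List (σ →₀ ℕ))} = ∅ := by ext m; simp
      rw [hset, Set.image_empty, Ideal.span_empty, Ideal.mem_bot]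
      constructor
      · rintro rfl d hd; exact absurd rfl hd
      · intro h
        ext d
        by_contra hd
        obtain ⟨m, hm, -⟩ := h d hd
        exact List.not_mem_nil hm
  | cons a G ih =>
      have hset : {m : σ →₀ ℕ | m ∈ a :: G} = insert a {m | m ∈ G} := by
        ext m; simp [List.mem_cons]
      rw [hset, Set.image_insert_eq]
      constructor
      · intro hf d hd
        rw [Ideal.span, Submodule.mem_span_insert] at hf
        obtain ⟨c, w, hw, rfl⟩ := hf
        have hsplit : coeff d (c • monomial a (1:k)) ≠ 0 ∨ coeff d w ≠ 0 := by
          by_contra h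
          push_neg at h
          rw [map_add, h.1, h.2, add_zero] at hd
          exact hd rfl
        rcases hsplit with h | h
        · refine ⟨a, List.mem_cons_self, ?_⟩
          rw [smul_eq_mul, coeff_mul_monomial] at h
          by_contra hle
          rw [if_neg hle] at h
          exact h rfl
        · obtain ⟨m, hm, hmd⟩ := (ih w).1 hw d h
          exact ⟨m, List.mem_cons_of_mem _ hm, hmd⟩
      · intro h
        set f₁ : MvPowerSeries σ k := fun e => if ∃ m ∈ G, m ≤ e then f e else 0 with hf₁
        have hf1c : ∀ e, coeff e f₁ = if ∃ m ∈ G, m ≤ e then f e else 0 := fun e => rfl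
        have hf1mem : f₁ ∈ Ideal.span ((fun m => monomial m (1:k)) '' {m | m ∈ G}) := by
          rw [ih]
          intro d hd
          rw [hf1c] at hd
          by_contra hc
          rw [if_neg hc] at hd
          exact hd rfl
        have hf2dvd : (monomial a (1:k)) ∣ (f - f₁) := by
          rw [aux_monomial_dvd_iff]
          intro d hd
          rw [map_sub, hf1c] at hd
          by_cases hG : ∃ m ∈ G, m ≤ d
          · rw [if_pos hG] at hd
            exact absurd (sub_self _) hd
          · rw [if_neg hG, sub_zero] at hd
            obtain ⟨m, hm, hmd⟩ := h d hd
            rcases List.mem_cons.1 hm with rfl | hm'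
            · exact hmd
            · exact absurd ⟨m, hm', hmd⟩ hG
        obtain ⟨q, hq⟩ := hf2dvd
        have : f = monomial a (1:k) * q + f₁ := by rw [← hq]; ring
        rw [this]
        refine Ideal.add_mem _ ?_ ?_
        · exact Ideal.mul_mem_right _ _ (Ideal.subset_span (Set.mem_insert _ _))
        · exact Ideal.span_mono (Set.subset_insert _ _) hf1mem
end General

section Fin2
variable {r : ℕ}

lemma fin01 : (0 : Fin (r+2)) ≠ 1 := by simp [Fin.ext_iff]

lemma finz0 (i : Fin r) : (i.succ.succ : Fin (r+2)) ≠ 0 := Fin.succ_ne_zero _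

lemma finz1 (i : Fin r) : (i.succ.succ : Fin (r+2)) ≠ 1 := by
  intro h
  rw [← Fin.succ_zero_eq_one, Fin.succ_inj] at h
  exact Fin.succ_ne_zero _ h

lemma fin_tri (j : Fin (r+2)) : j = 0 ∨ j = 1 ∨ ∃ i : Fin r, j = i.succ.succ := by
  obtain ⟨v, hv⟩ := j
  match v with
  | 0 => exact Or.inl rfl
  | 1 => exact Or.inr (Or.inl rfl)
  | (w+2) => exact Or.inr (Or.inr ⟨⟨w, by omega⟩, by simp [Fin.ext_iff, Fin.val_succ]⟩)

@[simp] lemma ap01 (a : ℕ) : (single (0:Fin (r+2)) a) 1 = 0 := single_eq_of_ne' fin01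
@[simp] lemma ap10 (b : ℕ) : (single (1:Fin (r+2)) b) 0 = 0 := single_eq_of_ne' fin01.symm
@[simp] lemma ap0z (a : ℕ) (i : Fin r) : (single (0:Fin (r+2)) a) i.succ.succ = 0 :=
  single_eq_of_ne' (finz0 i).symm
@[simp] lemma ap1z (b : ℕ) (i : Fin r) : (single (1:Fin (r+2)) b) i.succ.succ = 0 :=
  single_eq_of_ne' (finz1 i).symm
@[simp] lemma apz0 (c : ℕ) (i : Fin r) : (single (i.succ.succ:Fin (r+2)) c) 0 = 0 :=
  single_eq_of_ne' (finz0 i)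
@[simp] lemma apz1 (c : ℕ) (i : Fin r) : (single (i.succ.succ:Fin (r+2)) c) 1 = 0 :=
  single_eq_of_ne' (finz1 i)

lemma pair_le (a b : ℕ) (d : Fin (r+2) →₀ ℕ) :
    single 0 a + single 1 b ≤ d ↔ a ≤ d 0 ∧ b ≤ d 1 := by
  rw [Finsupp.le_def]
  constructor
  · intro h
    refine ⟨?_, ?_⟩
    · have := h 0; simpa using this
    · have := h 1; simpa using this
  · rintro ⟨h0, h1⟩ j
    rcases fin_tri j with rfl | rfl | ⟨i, rfl⟩
    · simpa using h0
    · simpa using h1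
    · simp
end Fin2

section Main
variable {k : Type} [Field k] {r : ℕ}

lemma coeff_mul_mono (w d : Fin (r+2) →₀ ℕ) (g : MvPowerSeries (Fin (r+2)) k) :
    coeff d (g * monomial w 1) = if w ≤ d then coeff (d - w) g else 0 := by
  rw [coeff_mul_monomial]; split_ifs <;> simp

def QJ (n : ℕ) (f : MvPowerSeries (Fin (r+2)) k) : Prop :=
  (∀ a, a < n → coeff (single 0 a) f = 0) ∧
  (∀ b, b < 3 → coeff (single 1 b) f = 0) ∧
  coeff (single 0 n) f = coeff (single 1 3) f

lemma QJ_gen {n : ℕ} (hn : 4 ≤ n) (g v : MvPowerSeries (Fin (r+2)) k)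
    (hv : v ∈ ({(X 1)^3 + (X 0)^n, (X 0) * (X 1)} ∪
      Set.range fun i : Fin r => (X i.succ.succ : MvPowerSeries (Fin (r+2)) k))) :
    QJ n (g * v) := by
  rcases hv with (rfl | rfl) | ⟨i, rfl⟩
  · -- v = y^3 + x^n
    rw [mul_add, X_pow_eq, X_pow_eq]
    refine ⟨?_, ?_, ?_⟩
    · intro a ha
      rw [map_add, coeff_mul_mono, coeff_mul_mono,
        if_neg (by rw [single_le_iff]; simp),
        if_neg (by rw [single_le_iff, single_eq_same]; omega), add_zero]
    · intro b hb
      rw [map_add, coeff_mul_mono, coeff_mul_mono,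
        if_neg (by rw [single_le_iff, single_eq_same]; omega),
        if_neg (by rw [single_le_iff]; simp only [ap10]; omega), add_zero]
    · rw [map_add, map_add, coeff_mul_mono, coeff_mul_mono, coeff_mul_mono, coeff_mul_mono,
        if_neg (by rw [single_le_iff]; simp), if_pos le_rfl,
        if_pos le_rfl, if_neg (by rw [single_le_iff]; simp only [ap10]; omega),
        tsub_self, tsub_self, zero_add, add_zero]
  · -- v = x*y
    rw [X_def, X_def, monomial_mul_monomial, one_mul]
    refine ⟨?_, ?_, ?_⟩
    · intro a ha
      rw [coeff_mul_mono, if_neg (by rw [pair_le]; simp)]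
    · intro b hb
      rw [coeff_mul_mono, if_neg (by rw [pair_le]; simp)]
    · rw [coeff_mul_mono, coeff_mul_mono, if_neg (by rw [pair_le]; simp),
        if_neg (by rw [pair_le]; simp)]
  · -- v = z i
    show QJ n (g * (X i.succ.succ : MvPowerSeries (Fin (r+2)) k))
    rw [X_def]
    refine ⟨?_, ?_, ?_⟩
    · intro a ha
      rw [coeff_mul_mono, if_neg (by rw [single_le_iff]; simp)]
    · intro b hb
      rw [coeff_mul_mono, if_neg (by rw [single_le_iff]; simp)]
    · rw [coeff_mul_mono, coeff_mul_mono, if_neg (by rw [single_le_iff]; simp),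
        if_neg (by rw [single_le_iff]; simp)]

lemma memJ_mp {n : ℕ} (hn : 4 ≤ n) (f : MvPowerSeries (Fin (r+2)) k)
    (hf : f ∈ Ideal.span ({(X 1)^3 + (X 0)^n, (X 0) * (X 1)} ∪
      Set.range fun i : Fin r => (X i.succ.succ : MvPowerSeries (Fin (r+2)) k))) :
    QJ n f := by
  have h : ∀ g, QJ n (g * f) := by
    refine Submodule.span_induction (p := fun v _ => ∀ g : MvPowerSeries (Fin (r+2)) k,
        QJ n (g * v)) (fun v hv g => QJ_gen hn g v hv) ?_ ?_ ?_ hf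
    · intro g
      rw [mul_zero]
      exact ⟨fun _ _ => map_zero _, fun _ _ => map_zero _, by rw [map_zero, map_zero]⟩
    · rintro v w hv hw ihv ihw g
      rw [mul_add]
      obtain ⟨h1, h2, h3⟩ := ihv g
      obtain ⟨h1', h2', h3'⟩ := ihw g
      exact ⟨fun a ha => by rw [map_add, h1 a ha, h1' a ha, add_zero],
        fun b hb => by rw [map_add, h2 b hb, h2' b hb, add_zero],
        by rw [map_add, map_add, h3, h3']⟩
    · intro c v hv ih g
      rw [smul_eq_mul, ← mul_assoc]
      exact ih (g * c)
  simpa using h 1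
end Main

section Main2
variable {k : Type} [Field k] {r : ℕ}

lemma memJ_mpr {n : ℕ} (hn : 4 ≤ n) (f : MvPowerSeries (Fin (r+2)) k) (hQ : QJ n f) :
    f ∈ Ideal.span ({(X 1)^3 + (X 0)^n, (X 0) * (X 1)} ∪
      Set.range fun i : Fin r => (X i.succ.succ : MvPowerSeries (Fin (r+2)) k)) := by
  classical
  obtain ⟨hQ1, hQ2, hQ3⟩ := hQ
  set c : MvPowerSeries (Fin (r+2)) k := fun e =>
    if e = single 1 (e 1) ∧ e ≠ 0 then coeff (single 1 (e 1 + 3)) f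
    else if e = single 0 (e 0) then coeff (single 0 (e 0 + n)) f else 0 with hc
  have hcc : ∀ e : Fin (r+2) →₀ ℕ, coeff e c =
      (if e = single 1 (e 1) ∧ e ≠ 0 then coeff (single 1 (e 1 + 3)) f
       else if e = single 0 (e 0) then coeff (single 0 (e 0 + n)) f else 0) :=
    fun e => rfl
  have hpurex : ∀ a : ℕ, coeff (single (0:Fin (r+2)) a) (c * ((X 1)^3 + (X 0)^n)) =
      if n ≤ a then coeff (single (0:Fin (r+2)) a) f else 0 := by
    intro a
    rw [X_pow_eq, X_pow_eq, mul_add, map_add, coeff_mul_mono, coeff_mul_mono,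
      if_neg (by rw [single_le_iff]; simp), zero_add]
    by_cases han : n ≤ a
    · rw [if_pos (by rw [single_le_iff, single_eq_same]; exact han), if_pos han,
        ← single_tsub, hcc]
      rw [if_neg (by
        rintro ⟨h1, h2⟩
        exact h2 (by simpa using h1))]
      rw [if_pos (by rw [single_eq_same])]
      rw [single_eq_same, tsub_add_cancel_of_le han]
    · rw [if_neg (by rw [single_le_iff, single_eq_same]; exact han), if_neg han]
  have hpurey : ∀ b : ℕ, coeff (single (1:Fin (r+2)) b) (c * ((X 1)^3 + (X 0)^n)) =
      if 3 ≤ b then coeff (single (1:Fin (r+2)) b) f else 0 := by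
    intro b
    rw [X_pow_eq, X_pow_eq, mul_add, map_add, coeff_mul_mono, coeff_mul_mono,
      if_neg (show ¬ (single (0:Fin (r+2)) n ≤ single 1 b) by
        rw [single_le_iff]; simp only [ap10]; omega), add_zero]
    by_cases h3 : 3 ≤ b
    · rw [if_pos (by rw [single_le_iff, single_eq_same]; exact h3), if_pos h3,
        ← single_tsub, hcc]
      by_cases h4 : 4 ≤ b
      · rw [if_pos (by
          constructor
          · rw [single_eq_same]
          · simp only [ne_eq, Finsupp.single_eq_zero]
            omega)]
        rw [single_eq_same, tsub_add_cancel_of_le h3]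
      · have hb3 : b = 3 := by omega
        subst hb3
        rw [if_neg (by
          rintro ⟨h1, h2⟩
          exact h2 (by simpa using (Finsupp.single_eq_zero.2 (by norm_num) : single (1:Fin (r+2)) (3-3) = 0)))]
        rw [if_pos (by
          rw [(Finsupp.single_eq_zero.2 (by norm_num) : single (1:Fin (r+2)) (3-3) = 0)]
          simp)]
        rw [(Finsupp.single_eq_zero.2 (by norm_num) : single (1:Fin (r+2)) (3-3) = 0)]
        simp only [Finsupp.coe_zero, Pi.zero_apply, zero_add]
        exact hQ3
    · rw [if_neg (by rw [single_le_iff, single_eq_same]; exact h3), if_neg h3]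
  set g := f - c * ((X 1)^3 + (X 0)^n) with hg
  have hmain : ∀ d : Fin (r+2) →₀ ℕ, coeff d g ≠ 0 →
      (1 ≤ d 0 ∧ 1 ≤ d 1) ∨ ∃ i : Fin r, 1 ≤ d i.succ.succ := by
    intro d hd
    by_contra hcon
    push_neg at hcon
    obtain ⟨h01, hzz⟩ := hcon
    have hz : ∀ i : Fin r, d i.succ.succ = 0 := fun i => by have := hzz i; omega
    have h01' : d 0 = 0 ∨ d 1 = 0 := by omega
    have hdec : d = single 0 (d 0) ∨ d = single 1 (d 1) := by
      rcases h01' with h | h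
      · right
        ext j
        rcases fin_tri j with rfl | rfl | ⟨i, rfl⟩
        · rw [h]; simp
        · rw [single_eq_same]
        · rw [hz i]; simp
      · left
        ext j
        rcases fin_tri j with rfl | rfl | ⟨i, rfl⟩
        · rw [single_eq_same]
        · rw [h]; simp
        · rw [hz i]; simp
    apply hd
    rw [hg, map_sub]
    rcases hdec with hd_eq | hd_eq
    · rw [hd_eq, hpurex]
      split_ifs with h
      · exact sub_self _
      · rw [hQ1 (d 0) (by omega), sub_zero]
    · rw [hd_eq, hpurey]
      split_ifs with h
      · exact sub_self _
      · rw [hQ2 (d 1) (by omega), sub_zero]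
  have hgmem : g ∈ Ideal.span ({(X 1)^3 + (X 0)^n, (X 0) * (X 1)} ∪
      Set.range fun i : Fin r => (X i.succ.succ : MvPowerSeries (Fin (r+2)) k)) := by
    have hG : g ∈ Ideal.span ((fun m => monomial m (1:k)) ''
        {m : Fin (r+2) →₀ ℕ | m ∈ (single (0:Fin (r+2)) 1 + single 1 1) ::
          (List.finRange r).map (fun i : Fin r => single (i.succ.succ : Fin (r+2)) (1:ℕ))}) := by
      rw [aux_mem_monSpan]
      intro d hd
      rcases hmain d hd with ⟨h0, h1⟩ | ⟨i, hi⟩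
      · exact ⟨single 0 1 + single 1 1, List.mem_cons_self, (pair_le 1 1 d).2 ⟨h0, h1⟩⟩
      · exact ⟨single i.succ.succ 1,
          List.mem_cons_of_mem _ (List.mem_map.2 ⟨i, List.mem_finRange i, rfl⟩),
          single_le_iff.2 hi⟩
    refine Ideal.span_le.2 ?_ hG
    rintro _ ⟨m, hm, rfl⟩
    rcases List.mem_cons.1 hm with rfl | hm'
    · show monomial (single (0:Fin (r+2)) 1 + single 1 1) (1:k) ∈
        Ideal.span ({(X 1)^3 + (X 0)^n, (X 0) * (X 1)} ∪
          Set.range fun i : Fin r => (X i.succ.succ : MvPowerSeries (Fin (r+2)) k))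
      have hmm : monomial (single (0:Fin (r+2)) 1 + single 1 1) (1:k) = X 0 * X 1 := by
        rw [X_def, X_def, monomial_mul_monomial, one_mul]
      rw [hmm]
      exact Ideal.subset_span (Set.mem_union_left _ (Set.mem_insert_of_mem _ rfl))
    · obtain ⟨i, _, rfl⟩ := List.mem_map.1 hm'
      show monomial (single (i.succ.succ:Fin (r+2)) 1) (1:k) ∈
        Ideal.span ({(X 1)^3 + (X 0)^n, (X 0) * (X 1)} ∪
          Set.range fun i : Fin r => (X i.succ.succ : MvPowerSeries (Fin (r+2)) k))
      rw [← X_def]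
      exact Ideal.subset_span (Set.mem_union_right _ ⟨i, rfl⟩)
  have hf : f = c * ((X 1)^3 + (X 0)^n) + g := by rw [hg]; ring
  rw [hf]
  exact Ideal.add_mem _
    (Ideal.mul_mem_left _ c (Ideal.subset_span (Set.mem_union_left _ (Set.mem_insert _ _)))) hgmem

end Main2

section Main3
variable {k : Type} [Field k] {r : ℕ}

lemma eq_single0 (d : Fin (r+2) →₀ ℕ) (hz : ∀ i : Fin r, d i.succ.succ = 0) (h1 : d 1 = 0) :
    d = single 0 (d 0) := by
  ext j
  rcases fin_tri j with rfl | rfl | ⟨i, rfl⟩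
  · rw [single_eq_same]
  · rw [h1]; simp
  · rw [hz i]; simp

lemma eq_single1 (d : Fin (r+2) →₀ ℕ) (hz : ∀ i : Fin r, d i.succ.succ = 0) (h0 : d 0 = 0) :
    d = single 1 (d 1) := by
  ext j
  rcases fin_tri j with rfl | rfl | ⟨i, rfl⟩
  · rw [h0]; simp
  · rw [single_eq_same]
  · rw [hz i]; simp

lemma coeff_x_shift (f : MvPowerSeries (Fin (r+2)) k) (a c : ℕ) :
    coeff (single (0:Fin (r+2)) c) (f * monomial (single 0 a) 1) =
      if a ≤ c then coeff (single (0:Fin (r+2)) (c - a)) f else 0 := by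
  rw [coeff_mul_mono]
  by_cases h : a ≤ c
  · rw [if_pos (by rw [single_le_iff, single_eq_same]; exact h), if_pos h, ← single_tsub]
  · rw [if_neg (by rw [single_le_iff, single_eq_same]; exact h), if_neg h]

lemma coeff_y_shift (f : MvPowerSeries (Fin (r+2)) k) (b e : ℕ) :
    coeff (single (1:Fin (r+2)) e) (f * monomial (single 1 b) 1) =
      if b ≤ e then coeff (single (1:Fin (r+2)) (e - b)) f else 0 := by
  rw [coeff_mul_mono]
  by_cases h : b ≤ e
  · rw [if_pos (by rw [single_le_iff, single_eq_same]; exact h), if_pos h, ← single_tsub]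
  · rw [if_neg (by rw [single_le_iff, single_eq_same]; exact h), if_neg h]

lemma coeff_x_of_y (f : MvPowerSeries (Fin (r+2)) k) (b : ℕ) (hb : 1 ≤ b) (c : ℕ) :
    coeff (single (0:Fin (r+2)) c) (f * monomial (single 1 b) 1) = 0 := by
  rw [coeff_mul_mono, if_neg (by rw [single_le_iff]; simp only [ap01]; omega)]

lemma coeff_y_of_x (f : MvPowerSeries (Fin (r+2)) k) (a : ℕ) (ha : 1 ≤ a) (e : ℕ) :
    coeff (single (1:Fin (r+2)) e) (f * monomial (single 0 a) 1) = 0 := by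
  rw [coeff_mul_mono, if_neg (by rw [single_le_iff]; simp only [ap10]; omega)]

lemma QJ_mul_x {n : ℕ} (f : MvPowerSeries (Fin (r+2)) k) (a : ℕ) (ha : 1 ≤ a) :
    QJ n (f * monomial (single 0 a) 1) ↔
      ∀ c, c + a ≤ n → coeff (single (0:Fin (r+2)) c) f = 0 := by
  constructor
  · rintro ⟨h1, h2, h3⟩ c hc
    rcases Nat.lt_or_ge (c + a) n with h | h
    · have := h1 (c + a) h
      rwa [coeff_x_shift, if_pos (by omega), Nat.add_sub_cancel] at this
    · have hca : c + a = n := by omega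
      have := h3
      rw [coeff_x_shift, if_pos (by omega), coeff_y_of_x _ _ ha] at this
      rwa [show n - a = c by omega] at this
  · intro h
    refine ⟨?_, ?_, ?_⟩
    · intro c hc
      rw [coeff_x_shift]
      split_ifs with h'
      · exact h (c - a) (by omega)
      · rfl
    · intro e _
      exact coeff_y_of_x _ _ ha _
    · rw [coeff_x_shift, coeff_y_of_x _ _ ha]
      split_ifs with h'
      · exact h (n - a) (by omega)
      · rfl

lemma QJ_mul_y {n : ℕ} (hn : 4 ≤ n) (f : MvPowerSeries (Fin (r+2)) k) (b : ℕ) (hb : 1 ≤ b) :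
    QJ n (f * monomial (single 1 b) 1) ↔
      ∀ e, e + b ≤ 3 → coeff (single (1:Fin (r+2)) e) f = 0 := by
  constructor
  · rintro ⟨h1, h2, h3⟩ e he
    rcases Nat.lt_or_ge (e + b) 3 with h | h
    · have := h2 (e + b) h
      rwa [coeff_y_shift, if_pos (by omega), Nat.add_sub_cancel] at this
    · have heb : e + b = 3 := by omega
      have := h3
      rw [coeff_y_shift, if_pos (by omega), coeff_x_of_y _ _ hb] at this
      rw [show (3:ℕ) - b = e by omega] at this
      exact this.symm
  · intro h
    refine ⟨?_, ?_, ?_⟩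
    · intro c _
      exact coeff_x_of_y _ _ hb _
    · intro e he
      rw [coeff_y_shift]
      split_ifs with h'
      · exact h (e - b) (by omega)
      · rfl
    · rw [coeff_y_shift, coeff_x_of_y _ _ hb]
      split_ifs with h'
      · exact (h (3 - b) (by omega)).symm
      · rfl

lemma QJ_pair {n : ℕ} (f : MvPowerSeries (Fin (r+2)) k) (a b : ℕ) (ha : 1 ≤ a) (hb : 1 ≤ b) :
    QJ n (f * monomial (single 0 a + single 1 b) 1) := by
  refine ⟨?_, ?_, ?_⟩
  · intro c _
    rw [coeff_mul_mono, if_neg (by rw [pair_le]; simp only [ap01]; omega)]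
  · intro e _
    rw [coeff_mul_mono, if_neg (by rw [pair_le]; simp only [ap10]; omega)]
  · rw [coeff_mul_mono, coeff_mul_mono,
      if_neg (by rw [pair_le]; simp only [ap01]; omega),
      if_neg (by rw [pair_le]; simp only [ap10]; omega)]

lemma pairmono (a b : ℕ) :
    (X 0 : MvPowerSeries (Fin (r+2)) k)^a * (X 1)^b =
      monomial (single 0 a + single 1 b) 1 := by
  rw [X_pow_eq, X_pow_eq, monomial_mul_monomial, one_mul]

lemma colon_char (n ℓ : ℕ) (f : MvPowerSeries (Fin (r+2)) k)
    (I J : Ideal (MvPowerSeries (Fin (r+2)) k))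
    (hI : I = Ideal.span ({X 0, X 1} ∪
      Set.range fun i : Fin r => (X i.succ.succ : MvPowerSeries (Fin (r+2)) k)))
    (hzJ : ∀ i : Fin r, (X i.succ.succ : MvPowerSeries (Fin (r+2)) k) ∈ J) :
    f ∈ Submodule.colon J ((I^ℓ : Ideal (MvPowerSeries (Fin (r+2)) k)) : Set (MvPowerSeries (Fin (r+2)) k)) ↔
      ∀ a b, a + b = ℓ → f * ((X 0)^a * (X 1)^b) ∈ J := by
  have hxI : (X 0 : MvPowerSeries (Fin (r+2)) k) ∈ I := by
    rw [hI]; exact Ideal.subset_span (Set.mem_union_left _ (Set.mem_insert _ _))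
  have hyI : (X 1 : MvPowerSeries (Fin (r+2)) k) ∈ I := by
    rw [hI]; exact Ideal.subset_span (Set.mem_union_left _ (Set.mem_insert_of_mem _ rfl))
  constructor
  · intro h a b hab
    have hmem : (X 0 : MvPowerSeries (Fin (r+2)) k)^a * (X 1)^b ∈ I^ℓ := by
      rw [← hab, pow_add]
      exact Ideal.mul_mem_mul (Ideal.pow_mem_pow hxI a) (Ideal.pow_mem_pow hyI b)
    have := Submodule.mem_colon.1 h _ hmem
    rwa [smul_eq_mul] at this
  · intro h
    -- the span of degree-ℓ products and the z's
    set Sℓ : ℕ → Set (MvPowerSeries (Fin (r+2)) k) := fun m =>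
      ((fun q : ℕ × ℕ => (X 0 : MvPowerSeries (Fin (r+2)) k)^q.1 * (X 1)^q.2) ''
        {q : ℕ × ℕ | q.1 + q.2 = m}) ∪
        Set.range fun i : Fin r => (X i.succ.succ : MvPowerSeries (Fin (r+2)) k) with hSl
    have Kle : ∀ m : ℕ, I^m ≤ Ideal.span (Sℓ m) := by
      intro m
      induction m with
      | zero =>
          have h1 : (1 : MvPowerSeries (Fin (r+2)) k) ∈ Ideal.span (Sℓ 0) := by
            refine Ideal.subset_span (Set.mem_union_left _ ⟨(0,0), rfl, by simp⟩)
          rw [pow_zero, Ideal.one_eq_top, (Ideal.eq_top_iff_one _).2 h1]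
      | succ m ih =>
          rw [pow_succ]
          refine le_trans (Ideal.mul_mono ih le_rfl) ?_
          rw [hI, Ideal.span_mul_span']
          refine Ideal.span_le.2 ?_
          rintro w ⟨u, hu, v, hv, rfl⟩
          rcases hu with ⟨⟨a, b⟩, hab, rfl⟩ | ⟨i, rfl⟩
          · rcases hv with (rfl | rfl) | ⟨i, rfl⟩
            · -- v = X 0
              refine Ideal.subset_span (Set.mem_union_left _ ⟨(a+1, b), by
                simp only [Set.mem_setOf_eq] at hab ⊢; omega, by
                show (X 0 : MvPowerSeries (Fin (r+2)) k)^(a+1) * (X 1)^b = _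
                ring⟩)
            · -- v = X 1
              refine Ideal.subset_span (Set.mem_union_left _ ⟨(a, b+1), by
                simp only [Set.mem_setOf_eq] at hab ⊢; omega, by
                show (X 0 : MvPowerSeries (Fin (r+2)) k)^a * (X 1)^(b+1) = _
                ring⟩)
            · -- v = z i
              exact Ideal.mul_mem_left _ _
                (Ideal.subset_span (Set.mem_union_right _ ⟨i, rfl⟩))
          · -- u = z i
            exact Ideal.mul_mem_right _ _
              (Ideal.subset_span (Set.mem_union_right _ ⟨i, rfl⟩))
    have hD : Ideal.span (Sℓ ℓ) ≤ Submodule.colon J (Ideal.span {f}) := by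
      refine Ideal.span_le.2 ?_
      intro v hv
      rw [SetLike.mem_coe, Submodule.mem_colon]
      intro q hq
      obtain ⟨c, rfl⟩ := Ideal.mem_span_singleton'.1 hq
      rcases hv with ⟨⟨a, b⟩, hab, rfl⟩ | ⟨i, rfl⟩
      · have hJ := h a b hab
        rw [show ((fun q : ℕ × ℕ => (X 0 : MvPowerSeries (Fin (r+2)) k)^q.1 * (X 1)^q.2) (a, b)) •
          (c * f) = c * (f * ((X 0)^a * (X 1)^b)) from by rw [smul_eq_mul]; ring]
        exact Ideal.mul_mem_left _ _ hJ
      · rw [show (X i.succ.succ : MvPowerSeries (Fin (r+2)) k) • (c * f) =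
          (c * f) * X i.succ.succ from by rw [smul_eq_mul]; ring]
        exact Ideal.mul_mem_left _ _ (hzJ i)
    rw [Submodule.mem_colon]
    intro p hp
    have hpD := hD (Kle ℓ hp)
    have := Submodule.mem_colon.1 hpD f (Ideal.mem_span_singleton_self f)
    rwa [smul_eq_mul, mul_comm] at this

end Main3

section Main4
variable {k : Type} [Field k] {r : ℕ}

lemma mem_RHS (P : Finset (ℕ × ℕ)) (f : MvPowerSeries (Fin (r+2)) k) :
    f ∈ Ideal.span ((fun q : ℕ×ℕ => (X 0 : MvPowerSeries (Fin (r+2)) k)^q.1 * (X 1)^q.2) '' ↑P ∪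
      Set.range fun i : Fin r => (X i.succ.succ : MvPowerSeries (Fin (r+2)) k)) ↔
    ∀ d : Fin (r+2) →₀ ℕ, coeff d f ≠ 0 →
      (∃ q ∈ P, q.1 ≤ d 0 ∧ q.2 ≤ d 1) ∨ ∃ i : Fin r, 1 ≤ d i.succ.succ := by
  have hL : ∀ m : Fin (r+2) →₀ ℕ,
      (m ∈ P.toList.map (fun q : ℕ×ℕ => single (0 : Fin (r+2)) q.1 + single 1 q.2) ++
        (List.finRange r).map (fun i : Fin r => single (i.succ.succ : Fin (r+2)) (1:ℕ))) ↔
      ((∃ q ∈ P, single (0 : Fin (r+2)) q.1 + single 1 q.2 = m) ∨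
        ∃ i : Fin r, single (i.succ.succ : Fin (r+2)) (1:ℕ) = m) := by
    intro m
    simp [List.mem_append, List.mem_map, Finset.mem_toList, List.mem_finRange]
  have hspan : Ideal.span ((fun q : ℕ×ℕ =>
        (X 0 : MvPowerSeries (Fin (r+2)) k)^q.1 * (X 1)^q.2) '' ↑P ∪
        Set.range fun i : Fin r => (X i.succ.succ : MvPowerSeries (Fin (r+2)) k)) =
      Ideal.span ((fun m => monomial m (1:k)) ''
        {m : Fin (r+2) →₀ ℕ |
          m ∈ P.toList.map (fun q : ℕ×ℕ => single (0 : Fin (r+2)) q.1 + single 1 q.2) ++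
            (List.finRange r).map (fun i : Fin r => single (i.succ.succ : Fin (r+2)) (1:ℕ))}) := by
    apply le_antisymm
    · refine Ideal.span_le.2 ?_
      rintro v (⟨⟨a,b⟩, hq, rfl⟩ | ⟨i, rfl⟩)
      · show (X 0 : MvPowerSeries (Fin (r+2)) k)^a * (X 1)^b ∈ _
        rw [pairmono]
        exact Ideal.subset_span ⟨single 0 a + single 1 b,
          (hL _).2 (Or.inl ⟨(a,b), hq, rfl⟩), rfl⟩
      · show (X i.succ.succ : MvPowerSeries (Fin (r+2)) k) ∈ _
        rw [X_def]
        exact Ideal.subset_span ⟨single i.succ.succ 1, (hL _).2 (Or.inr ⟨i, rfl⟩), rfl⟩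
    · refine Ideal.span_le.2 ?_
      rintro v ⟨m, hm, rfl⟩
      rcases (hL m).1 hm with ⟨⟨a,b⟩, hq, rfl⟩ | ⟨i, rfl⟩
      · show monomial (single (0:Fin (r+2)) a + single 1 b) (1:k) ∈ _
        rw [← pairmono]
        exact Ideal.subset_span (Set.mem_union_left _ ⟨(a,b), hq, rfl⟩)
      · show monomial (single (i.succ.succ : Fin (r+2)) 1) (1:k) ∈ _
        rw [← X_def]
        exact Ideal.subset_span (Set.mem_union_right _ ⟨i, rfl⟩)
  rw [hspan, aux_mem_monSpan]
  refine forall_congr' fun d => imp_congr_right fun _ => ?_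
  constructor
  · rintro ⟨m, hm, hmd⟩
    rcases (hL m).1 hm with ⟨⟨a,b⟩, hq, rfl⟩ | ⟨i, rfl⟩
    · exact Or.inl ⟨(a,b), hq, (pair_le a b d).1 hmd⟩
    · exact Or.inr ⟨i, single_le_iff.1 hmd⟩
  · rintro (⟨⟨a,b⟩, hq, h0, h1⟩ | ⟨i, hi⟩)
    · exact ⟨single 0 a + single 1 b, (hL _).2 (Or.inl ⟨(a,b), hq, rfl⟩),
        (pair_le a b d).2 ⟨h0, h1⟩⟩
    · exact ⟨single i.succ.succ 1, (hL _).2 (Or.inr ⟨i, rfl⟩), single_le_iff.2 hi⟩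

lemma W_iff {n : ℕ} (hn : 4 ≤ n) (ℓ : ℕ) (hl : 1 ≤ ℓ) (f : MvPowerSeries (Fin (r+2)) k) :
    (∀ a b, a + b = ℓ → QJ n (f * ((X 0 : MvPowerSeries (Fin (r+2)) k)^a * (X 1)^b))) ↔
      ((∀ c, c + ℓ ≤ n → coeff (single (0:Fin (r+2)) c) f = 0) ∧
       (∀ e, e + ℓ ≤ 3 → coeff (single (1:Fin (r+2)) e) f = 0)) := by
  constructor
  · intro h
    constructor
    · have := h ℓ 0 (by omega)
      rw [pairmono, Finsupp.single_zero, add_zero] at this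
      exact (QJ_mul_x f ℓ hl).1 this
    · have := h 0 ℓ (by omega)
      rw [pairmono, Finsupp.single_zero, zero_add] at this
      exact (QJ_mul_y hn f ℓ hl).1 this
  · rintro ⟨hx, hy⟩ a b hab
    rw [pairmono]
    rcases Nat.eq_zero_or_pos a with rfl | hA
    · have hbl : b = ℓ := by omega
      subst hbl
      rw [Finsupp.single_zero, zero_add]
      exact (QJ_mul_y hn f b hl).2 hy
    · rcases Nat.eq_zero_or_pos b with rfl | hB
      · have hal : a = ℓ := by omega
        subst hal
        rw [Finsupp.single_zero, add_zero]
        exact (QJ_mul_x f a hl).2 hx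
      · exact QJ_pair f a b hA hB

end Main4

/-- Colon filtration of the local model of a `C_{3,n}` cuspidal structure:
`J : I = (xⁿ, xy, y³, z)`, `J : I² = (x^{n−1}, xy, y², z)`,
`J : I^ℓ = (x^{n+1−ℓ}, y, z)` for `3 ≤ ℓ ≤ n`, and `J : I^{n+1} = R`. -/
theorem stmt_13 (k : Type) [Field k] (n r : ℕ) (hn : 4 ≤ n)
    (x y : MvPowerSeries (Fin (r + 2)) k) (z : Fin r → MvPowerSeries (Fin (r + 2)) k)
    (hx : x = MvPowerSeries.X 0) (hy : y = MvPowerSeries.X 1)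
    (hz : ∀ i : Fin r, z i = MvPowerSeries.X i.succ.succ)
    (I J : Ideal (MvPowerSeries (Fin (r + 2)) k))
    (hI : I = Ideal.span ({x, y} ∪ Set.range z))
    (hJ : J = Ideal.span ({y ^ 3 + x ^ n, x * y} ∪ Set.range z)) :
    Submodule.colon J ((I ^ 1 : Ideal (MvPowerSeries (Fin (r + 2)) k)) : Set (MvPowerSeries (Fin (r + 2)) k)) = Ideal.span ({x ^ n, x * y, y ^ 3} ∪ Set.range z) ∧
    Submodule.colon J ((I ^ 2 : Ideal (MvPowerSeries (Fin (r + 2)) k)) : Set (MvPowerSeries (Fin (r + 2)) k)) =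
      Ideal.span ({x ^ (n - 1), x * y, y ^ 2} ∪ Set.range z) ∧
    (∀ ℓ : ℕ, 3 ≤ ℓ → ℓ ≤ n →
      Submodule.colon J ((I ^ ℓ : Ideal (MvPowerSeries (Fin (r + 2)) k)) : Set (MvPowerSeries (Fin (r + 2)) k)) = Ideal.span ({x ^ (n + 1 - ℓ), y} ∪ Set.range z)) ∧
    Submodule.colon J ((I ^ (n + 1) : Ideal (MvPowerSeries (Fin (r + 2)) k)) : Set (MvPowerSeries (Fin (r + 2)) k)) = ⊤ := by
  subst hx hy
  have hzz : z = fun i : Fin r => (X i.succ.succ : MvPowerSeries (Fin (r+2)) k) := funext hz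
  subst hzz hI hJ
  have hzJ : ∀ i : Fin r, (X i.succ.succ : MvPowerSeries (Fin (r+2)) k) ∈
      Ideal.span ({(X 1 : MvPowerSeries (Fin (r+2)) k) ^ 3 + (X 0) ^ n, X 0 * X 1} ∪
        Set.range fun i : Fin r => (X i.succ.succ : MvPowerSeries (Fin (r+2)) k)) :=
    fun i => Ideal.subset_span (Set.mem_union_right _ ⟨i, rfl⟩)
  have key : ∀ (ℓ : ℕ) (f : MvPowerSeries (Fin (r+2)) k),
      f ∈ Submodule.colon (Ideal.span ({(X 1 : MvPowerSeries (Fin (r+2)) k) ^ 3 + (X 0) ^ n,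
          X 0 * X 1} ∪ Set.range fun i : Fin r => (X i.succ.succ : MvPowerSeries (Fin (r+2)) k)))
        (((Ideal.span ({(X 0 : MvPowerSeries (Fin (r+2)) k), X 1} ∪
          Set.range fun i : Fin r => (X i.succ.succ : MvPowerSeries (Fin (r+2)) k))) ^ ℓ :
          Ideal (MvPowerSeries (Fin (r+2)) k)) : Set (MvPowerSeries (Fin (r+2)) k)) ↔
      ∀ a b, a + b = ℓ → QJ n (f * ((X 0 : MvPowerSeries (Fin (r+2)) k)^a * (X 1)^b)) :=
    fun ℓ f => (colon_char n ℓ f _ _ rfl hzJ).trans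
      (forall_congr' fun a => forall_congr' fun b => imp_congr_right fun _ =>
        ⟨memJ_mp hn _, memJ_mpr hn _⟩)
  refine ⟨?_, ?_, ?_, ?_⟩
  · -- J : I = (x^n, xy, y^3, z)
    have hset : ((fun q : ℕ×ℕ => (X 0 : MvPowerSeries (Fin (r+2)) k)^q.1 * (X 1)^q.2) ''
        ↑({(n,0),(1,1),(0,3)} : Finset (ℕ×ℕ))) =
        {(X 0 : MvPowerSeries (Fin (r+2)) k) ^ n, X 0 * X 1, (X 1) ^ 3} := by
      simp [Finset.coe_insert, Finset.coe_singleton, Set.image_insert_eq, Set.image_singleton,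
        pow_zero, pow_one, one_mul, mul_one]
    have hiff : ∀ f : MvPowerSeries (Fin (r+2)) k,
        ((∀ c, c + 1 ≤ n → coeff (single (0:Fin (r+2)) c) f = 0) ∧
         (∀ e, e + 1 ≤ 3 → coeff (single (1:Fin (r+2)) e) f = 0)) ↔
        (∀ d : Fin (r+2) →₀ ℕ, coeff d f ≠ 0 →
          (∃ q ∈ ({(n,0),(1,1),(0,3)} : Finset (ℕ×ℕ)), q.1 ≤ d 0 ∧ q.2 ≤ d 1) ∨
            ∃ i : Fin r, 1 ≤ d i.succ.succ) := by
      intro f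
      constructor
      · rintro ⟨hxc, hyc⟩ d hd
        by_contra hB
        push_neg at hB
        obtain ⟨hq, hzd⟩ := hB
        have h1 := hq (n,0) (by simp)
        have h2 := hq (1,1) (by simp)
        have h3 := hq (0,3) (by simp)
        simp only at h1 h2 h3
        have hz0 : ∀ i : Fin r, d i.succ.succ = 0 := fun i => by have := hzd i; omega
        have hd0 : d 0 < n := by
          by_cases hc : n ≤ d 0
          · have := h1 hc; omega
          · omega
        have hd13 : d 1 < 3 := by have := h3 (Nat.zero_le _); omega
        have hd01 : d 0 = 0 ∨ d 1 = 0 := by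
          by_cases hc : 1 ≤ d 0
          · right; have := h2 hc; omega
          · left; omega
        apply hd
        rcases hd01 with h | h
        · rw [eq_single1 d hz0 h]
          exact hyc (d 1) (by omega)
        · rw [eq_single0 d hz0 h]
          exact hxc (d 0) (by omega)
      · intro hB
        constructor
        · intro c hc
          by_contra hne
          rcases hB (single 0 c) hne with ⟨q, hq, h0, h1⟩ | ⟨i, hi⟩
          · simp only [Finset.mem_insert, Finset.mem_singleton] at hq
            rcases hq with rfl | rfl | rfl
            · simp only [single_eq_same] at h0; omega
            · simp only [ap01] at h1; omega
            · simp only [ap01] at h1; omega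
          · rw [ap0z] at hi; omega
        · intro e he
          by_contra hne
          rcases hB (single 1 e) hne with ⟨q, hq, h0, h1⟩ | ⟨i, hi⟩
          · simp only [Finset.mem_insert, Finset.mem_singleton] at hq
            rcases hq with rfl | rfl | rfl
            · simp only [ap10] at h0; omega
            · simp only [ap10] at h0; omega
            · simp only [single_eq_same] at h1; omega
          · rw [ap1z] at hi; omega
    refine Submodule.ext fun f => ?_
    rw [← hset]
    exact (((key 1 f).trans (W_iff hn 1 (by omega) f)).trans (hiff f)).trans
      (mem_RHS _ f).symm
  · -- J : I² = (x^(n-1), xy, y², z)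
    have hset : ((fun q : ℕ×ℕ => (X 0 : MvPowerSeries (Fin (r+2)) k)^q.1 * (X 1)^q.2) ''
        ↑({(n-1,0),(1,1),(0,2)} : Finset (ℕ×ℕ))) =
        {(X 0 : MvPowerSeries (Fin (r+2)) k) ^ (n-1), X 0 * X 1, (X 1) ^ 2} := by
      simp [Finset.coe_insert, Finset.coe_singleton, Set.image_insert_eq, Set.image_singleton,
        pow_zero, pow_one, one_mul, mul_one]
    have hiff : ∀ f : MvPowerSeries (Fin (r+2)) k,
        ((∀ c, c + 2 ≤ n → coeff (single (0:Fin (r+2)) c) f = 0) ∧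
         (∀ e, e + 2 ≤ 3 → coeff (single (1:Fin (r+2)) e) f = 0)) ↔
        (∀ d : Fin (r+2) →₀ ℕ, coeff d f ≠ 0 →
          (∃ q ∈ ({(n-1,0),(1,1),(0,2)} : Finset (ℕ×ℕ)), q.1 ≤ d 0 ∧ q.2 ≤ d 1) ∨
            ∃ i : Fin r, 1 ≤ d i.succ.succ) := by
      intro f
      constructor
      · rintro ⟨hxc, hyc⟩ d hd
        by_contra hB
        push_neg at hB
        obtain ⟨hq, hzd⟩ := hB
        have h1 := hq (n-1,0) (by simp)
        have h2 := hq (1,1) (by simp)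
        have h3 := hq (0,2) (by simp)
        simp only at h1 h2 h3
        have hz0 : ∀ i : Fin r, d i.succ.succ = 0 := fun i => by have := hzd i; omega
        have hd0 : d 0 < n - 1 := by
          by_cases hc : n - 1 ≤ d 0
          · have := h1 hc; omega
          · omega
        have hd13 : d 1 < 2 := by have := h3 (Nat.zero_le _); omega
        have hd01 : d 0 = 0 ∨ d 1 = 0 := by
          by_cases hc : 1 ≤ d 0
          · right; have := h2 hc; omega
          · left; omega
        apply hd
        rcases hd01 with h | h
        · rw [eq_single1 d hz0 h]
          exact hyc (d 1) (by omega)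
        · rw [eq_single0 d hz0 h]
          exact hxc (d 0) (by omega)
      · intro hB
        constructor
        · intro c hc
          by_contra hne
          rcases hB (single 0 c) hne with ⟨q, hq, h0, h1⟩ | ⟨i, hi⟩
          · simp only [Finset.mem_insert, Finset.mem_singleton] at hq
            rcases hq with rfl | rfl | rfl
            · simp only [single_eq_same] at h0; omega
            · simp only [ap01] at h1; omega
            · simp only [ap01] at h1; omega
          · rw [ap0z] at hi; omega
        · intro e he
          by_contra hne
          rcases hB (single 1 e) hne with ⟨q, hq, h0, h1⟩ | ⟨i, hi⟩
          · simp only [Finset.mem_insert, Finset.mem_singleton] at hq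
            rcases hq with rfl | rfl | rfl
            · simp only [ap10] at h0; omega
            · simp only [ap10] at h0; omega
            · simp only [single_eq_same] at h1; omega
          · rw [ap1z] at hi; omega
    refine Submodule.ext fun f => ?_
    rw [← hset]
    exact (((key 2 f).trans (W_iff hn 2 (by omega) f)).trans (hiff f)).trans
      (mem_RHS _ f).symm
  · -- J : I^ℓ = (x^(n+1-ℓ), y, z) for 3 ≤ ℓ ≤ n
    intro ℓ hl3 hln
    have hset : ((fun q : ℕ×ℕ => (X 0 : MvPowerSeries (Fin (r+2)) k)^q.1 * (X 1)^q.2) ''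
        ↑({(n+1-ℓ,0),(0,1)} : Finset (ℕ×ℕ))) =
        {(X 0 : MvPowerSeries (Fin (r+2)) k) ^ (n+1-ℓ), X 1} := by
      simp [Finset.coe_insert, Finset.coe_singleton, Set.image_insert_eq, Set.image_singleton,
        pow_zero, pow_one, one_mul, mul_one]
    have hiff : ∀ f : MvPowerSeries (Fin (r+2)) k,
        ((∀ c, c + ℓ ≤ n → coeff (single (0:Fin (r+2)) c) f = 0) ∧
         (∀ e, e + ℓ ≤ 3 → coeff (single (1:Fin (r+2)) e) f = 0)) ↔
        (∀ d : Fin (r+2) →₀ ℕ, coeff d f ≠ 0 →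
          (∃ q ∈ ({(n+1-ℓ,0),(0,1)} : Finset (ℕ×ℕ)), q.1 ≤ d 0 ∧ q.2 ≤ d 1) ∨
            ∃ i : Fin r, 1 ≤ d i.succ.succ) := by
      intro f
      constructor
      · rintro ⟨hxc, hyc⟩ d hd
        by_contra hB
        push_neg at hB
        obtain ⟨hq, hzd⟩ := hB
        have h1 := hq (n+1-ℓ,0) (by simp)
        have h2 := hq (0,1) (by simp)
        simp only at h1 h2
        have hz0 : ∀ i : Fin r, d i.succ.succ = 0 := fun i => by have := hzd i; omega
        have hd0 : d 0 < n + 1 - ℓ := by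
          by_cases hc : n + 1 - ℓ ≤ d 0
          · have := h1 hc; omega
          · omega
        have hd1 : d 1 = 0 := by have := h2 (Nat.zero_le _); omega
        apply hd
        rw [eq_single0 d hz0 hd1]
        exact hxc (d 0) (by omega)
      · intro hB
        constructor
        · intro c hc
          by_contra hne
          rcases hB (single 0 c) hne with ⟨q, hq, h0, h1⟩ | ⟨i, hi⟩
          · simp only [Finset.mem_insert, Finset.mem_singleton] at hq
            rcases hq with rfl | rfl
            · simp only [single_eq_same] at h0; omega
            · simp only [ap01] at h1; omega
          · rw [ap0z] at hi; omega
        · intro e he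
          by_contra hne
          rcases hB (single 1 e) hne with ⟨q, hq, h0, h1⟩ | ⟨i, hi⟩
          · simp only [Finset.mem_insert, Finset.mem_singleton] at hq
            rcases hq with rfl | rfl
            · simp only [ap10] at h0; omega
            · simp only [single_eq_same] at h1; omega
          · rw [ap1z] at hi; omega
    refine Submodule.ext fun f => ?_
    rw [← hset]
    exact (((key ℓ f).trans (W_iff hn ℓ (by omega) f)).trans (hiff f)).trans
      (mem_RHS _ f).symm
  · -- J : I^(n+1) = ⊤
    rw [Ideal.eq_top_iff_one]
    exact (key (n+1) 1).2 ((W_iff hn (n+1) (by omega) 1).2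
      ⟨fun c hc => absurd hc (by omega), fun e he => absurd he (by omega)⟩)
end
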